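/- arXiv:0909.2800 — 2 statements merged into one kernel-verified Lean document; each statement's English description precedes it below -/
import Mathlib

section
/- Let 𝕂 be ℝ or ℂ, let r, n be positive integers, and let ω = (ω_1,…,ω_n) ∈ {1,…,r}^n be a word that is not equal to a power of a shorter word. Then there exists an irreducible r-tuple 𝒜 = (A_1,…,A_r) of n×n matrices over 𝕂 such that 𝒜 satisfies the strong finiteness hypothesis with characteristic word ω, the matrices A_1,…,A_r are pairwise distinct, and the matrix A_{ω_n}⋯A_{ω_1} has rank one. -/
open Filter Topology

noncomputable section

namespace JSRPaper

variable {𝕂 : Type*} [RCLike 𝕂] {ι : Type*} [Fintype ι] [DecidableEq ι] {r : ℕ}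

/-- The Euclidean operator norm of a matrix, i.e. the operator norm induced by the
Euclidean norm on `𝕂^ι`. -/
noncomputable def eNorm (A : Matrix ι ι 𝕂) : ℝ :=
  ‖Matrix.toEuclideanCLM (𝕜 := 𝕂) A‖

/-- The product `A_{i n} ⋯ A_{i 1}` associated to the word `i : Fin n → Fin r`. -/
noncomputable def wordProd (A : Fin r → Matrix ι ι 𝕂) {n : ℕ} (i : Fin n → Fin r) :
    Matrix ι ι 𝕂 :=
  ((List.ofFn fun k => A (i k)).reverse).prod

/-- The joint spectral radius of the tuple `A`, expressed via the standard
characterisation `ϱ(𝒜) = inf_n max_{|i| = n} ‖A_{i_n} ⋯ A_{i_1}‖^{1/n}`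
(the infimum equals the limit). -/
noncomputable def jsr (A : Fin r → Matrix ι ι 𝕂) : ℝ :=
  ⨅ n : ℕ+, (⨆ i : Fin (n : ℕ) → Fin r, eNorm (wordProd A i)) ^ ((n : ℝ)⁻¹)

/-- The spectral radius of a matrix, via Gelfand's formula
`ρ(A) = inf_k ‖A^k‖^{1/k}` (the infimum equals the limit). -/
noncomputable def specRad (A : Matrix ι ι 𝕂) : ℝ :=
  ⨅ k : ℕ+, eNorm (A ^ (k : ℕ)) ^ (((k : ℕ) : ℝ)⁻¹)

/-- `N` is a norm on `𝕂^ι`. -/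
def IsNorm (N : EuclideanSpace 𝕂 ι → ℝ) : Prop :=
  (∀ v, N v = 0 ↔ v = 0) ∧ (∀ (c : 𝕂) (v), N (c • v) = ‖c‖ * N v) ∧
    ∀ u v, N (u + v) ≤ N u + N v

/-- The operator norm of the matrix `A` induced by the norm `N` on `𝕂^ι`. -/
noncomputable def opNormWrt (N : EuclideanSpace 𝕂 ι → ℝ) (A : Matrix ι ι 𝕂) : ℝ :=
  sSup {x : ℝ | ∃ v, N v ≤ 1 ∧ x = N (Matrix.toEuclideanCLM (𝕜 := 𝕂) A v)}

/-- `N` is a Barabanov norm for the tuple `A` : it is a norm and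
`ϱ(𝒜) ‖v‖ = max_i ‖A_i v‖` for every `v`. -/
def IsBarabanov (A : Fin r → Matrix ι ι 𝕂) (N : EuclideanSpace 𝕂 ι → ℝ) : Prop :=
  IsNorm N ∧ ∀ v, jsr A * N v = ⨆ i : Fin r, N (Matrix.toEuclideanCLM (𝕜 := 𝕂) (A i) v)

/-- The tuple `A` is irreducible: no subspace of `𝕂^ι` other than `⊥` and `⊤`
is invariant under every `A i`. -/
def IsIrreducible (A : Fin r → Matrix ι ι 𝕂) : Prop :=
  ∀ V : Submodule 𝕂 (EuclideanSpace 𝕂 ι),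
    (∀ i, ∀ v ∈ V, Matrix.toEuclideanCLM (𝕜 := 𝕂) (A i) v ∈ V) → V = ⊥ ∨ V = ⊤

/-- Two words of length `n` are rotation equivalent if one is a cyclic shift of the other. -/
def RotEquiv {n : ℕ} (z w : Fin n → Fin r) : Prop :=
  ∃ k : ℕ, ∀ j : Fin n, z j = w ⟨(j.val + k) % n, Nat.mod_lt _ j.pos⟩

/-- The tuple `A` satisfies the strong finiteness hypothesis with characteristic word `ω`:
for every Barabanov norm `N` for `A`, every word of the same length as `ω` which is not
rotation equivalent to `ω` has `N`-operator-norm product strictly less than `ϱ(𝒜)^n`. -/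
def StrongFinHyp (A : Fin r → Matrix ι ι 𝕂) {n : ℕ} (ω : Fin n → Fin r) : Prop :=
  ∀ N : EuclideanSpace 𝕂 ι → ℝ, IsBarabanov A N →
    ∀ z : Fin n → Fin r, ¬ RotEquiv z ω → opNormWrt N (wordProd A z) < jsr A ^ n

/-- The tuple `A` is relatively product bounded : `ϱ(𝒜) > 0` and the set of normalised
products `ϱ(𝒜)^{-n} A_{i_n} ⋯ A_{i_1}` is bounded. -/
def RelProdBounded (A : Fin r → Matrix ι ι 𝕂) : Prop :=
  0 < jsr A ∧ ∃ C : ℝ, ∀ (n : ℕ) (i : Fin n → Fin r), eNorm (wordProd A i) ≤ C * jsr A ^ n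

/-- The limit semigroup `𝒮(𝒜) = ⋂_{m ≥ 1} closure (⋃_{n ≥ m} ϱ(𝒜)^{-n} 𝒜_n)`,
written out via the metric characterisation of the closure. -/
def limitSemigroup (A : Fin r → Matrix ι ι 𝕂) : Set (Matrix ι ι 𝕂) :=
  {B | ∀ m : ℕ, ∀ ε > (0 : ℝ), ∃ n : ℕ, m ≤ n ∧ ∃ i : Fin n → Fin r,
    eNorm ((jsr A ^ n)⁻¹ • wordProd A i - B) < ε}

/-- The tuple `A` has the rank one property: it is relatively product bounded and every
nonzero element of the limit semigroup has rank one. -/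
def RankOneProp (A : Fin r → Matrix ι ι 𝕂) : Prop :=
  RelProdBounded A ∧ ∀ B ∈ limitSemigroup A, B ≠ 0 → B.rank = 1

/-- The product `A_{i n} ⋯ A_{i 1}` along the first `n` terms of the sequence `i`
(indexed from `1`). -/
noncomputable def seqProd (A : Fin r → Matrix ι ι 𝕂) (i : ℕ → Fin r) (n : ℕ) :
    Matrix ι ι 𝕂 :=
  wordProd A fun k : Fin n => i (k.val + 1)

/-- The unbounded agreements property: any two sequences whose normalised partial
products do not tend to zero (i.e. `limsup ‖A_{i(n)} ⋯ A_{i(1)}‖ / ϱ(𝒜)^n > 0`) contain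
arbitrarily long identical blocks. -/
def UnboundedAgreements (A : Fin r → Matrix ι ι 𝕂) : Prop :=
  ∀ N : ℕ, ∀ i₁ i₂ : ℕ → Fin r,
    (∃ c > (0 : ℝ), ∀ m : ℕ, ∃ n, m ≤ n ∧ c ≤ eNorm (seqProd A i₁ n) / jsr A ^ n) →
    (∃ c > (0 : ℝ), ∀ m : ℕ, ∃ n, m ≤ n ∧ c ≤ eNorm (seqProd A i₂ n) / jsr A ^ n) →
    ∃ n₁ n₂ : ℕ, ∀ k : ℕ, 1 ≤ k → k ≤ N → i₁ (n₁ + k) = i₂ (n₂ + k)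

/-- The finiteness property: some periodic product realises the joint spectral radius,
`ρ(A_{i_n} ⋯ A_{i_1})^{1/n} = ϱ(𝒜)`. -/
def FinitenessProp (A : Fin r → Matrix ι ι 𝕂) : Prop :=
  ∃ (n : ℕ) (_ : 0 < n) (i : Fin n → Fin r),
    specRad (wordProd A i) ^ ((n : ℝ)⁻¹) = jsr A

/-- The second exterior power (second compound matrix) of a `d × d` matrix, written
in the standard basis `(e_i ∧ e_j)_{i < j}` of `⋀² 𝕂^d`. -/
noncomputable def ext2 {d : ℕ} (A : Matrix (Fin d) (Fin d) 𝕂) :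
    Matrix {p : Fin d × Fin d // p.1 < p.2} {p : Fin d × Fin d // p.1 < p.2} 𝕂 :=
  fun p q => A p.1.1 q.1.1 * A p.1.2 q.1.2 - A p.1.1 q.1.2 * A p.1.2 q.1.1

/-- The word `ω` of length `n` is a power of a shorter word. -/
def IsPowerOfShorter {n : ℕ} (ω : Fin n → Fin r) : Prop :=
  ∃ (q : ℕ) (h0 : 0 < q) (h1 : q < n), q ∣ n ∧
    ∀ j : Fin n, ω j = ω ⟨j.val % q, lt_trans (Nat.mod_lt _ h0) h1⟩

/-- `Θ_ω(𝒜)`: the supremum of `‖A_{ω_n} ⋯ A_{ω_1}‖^{1/n}` over all Barabanov norms. -/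
noncomputable def Theta {n : ℕ} (ω : Fin n → Fin r) (A : Fin r → Matrix ι ι 𝕂) : ℝ :=
  sSup {x : ℝ | ∃ N, IsBarabanov A N ∧ x = opNormWrt N (wordProd A ω) ^ ((n : ℝ)⁻¹)}

end JSRPaper

section Aux
namespace JSRAux
open Matrix JSRPaper
open Fin.NatCast Fin.CommRing

set_option linter.unusedSectionVars false

variable {𝕂 : Type*} [RCLike 𝕂] {ι : Type*} [Fintype ι] [DecidableEq ι] {r n' : ℕ}

/-- generalized permutation matrix along `τ` with column scalars `t`. -/
def shiftMat (τ : Equiv.Perm ι) (t : ι → 𝕂) : Matrix ι ι 𝕂 :=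
  Matrix.of fun a b => if a = τ b then t b else 0

lemma shiftMat_mul (τ τ' : Equiv.Perm ι) (t t' : ι → 𝕂) :
    shiftMat τ t * shiftMat τ' t' = shiftMat (τ * τ') (fun b => t (τ' b) * t' b) := by
  ext a b
  simp only [shiftMat, Matrix.mul_apply, Matrix.of_apply]
  rw [Finset.sum_eq_single (τ' b)]
  · simp [Equiv.Perm.mul_apply]
    congr
  · intro j _ hj
    simp [if_neg hj]
  · simp

lemma shiftMat_one_fun : shiftMat (1 : Equiv.Perm ι) (fun _ => (1:𝕂)) = 1 := by
  ext a b
  simp [shiftMat, Matrix.one_apply, eq_comm]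
  congr

lemma shiftMat_diagonal (t : ι → 𝕂) : shiftMat (1 : Equiv.Perm ι) t = Matrix.diagonal t := by
  ext a b
  by_cases h : a = b <;> simp [shiftMat, Matrix.diagonal, h]

lemma clm_apply (A : Matrix ι ι 𝕂) (v : EuclideanSpace 𝕂 ι) (a : ι) :
    (Matrix.toEuclideanCLM (𝕜 := 𝕂) A v) a = ∑ b, A a b * v b := by
  have h := Matrix.ofLp_toEuclideanCLM (𝕜 := 𝕂) A v
  have := congrFun h a
  simpa [Matrix.toLin'_apply, Matrix.mulVec, dotProduct] using this

lemma clm_shiftMat_apply (τ : Equiv.Perm ι) (t : ι → 𝕂) (v : EuclideanSpace 𝕂 ι) (a : ι) :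
    (Matrix.toEuclideanCLM (𝕜 := 𝕂) (shiftMat τ t) v) a = t (τ⁻¹ a) * v (τ⁻¹ a) := by
  rw [clm_apply]
  rw [Finset.sum_eq_single (τ⁻¹ a)]
  · simp [shiftMat]
  · intro j _ hj
    have : a ≠ τ j := by
      intro h; exact hj (by simp [h])
    simp [shiftMat, if_neg this]
  · simp

lemma clm_shiftMat_single (τ : Equiv.Perm ι) (t : ι → 𝕂) (b : ι) (x : 𝕂) :
    Matrix.toEuclideanCLM (𝕜 := 𝕂) (shiftMat τ t) (EuclideanSpace.single b x)
      = EuclideanSpace.single (τ b) (t b * x) := by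
  apply (WithLp.equiv 2 _).injective
  funext a
  have h1 := clm_shiftMat_apply τ t (EuclideanSpace.single b x) a
  simp only [WithLp.equiv_apply]
  rw [h1]
  simp only [EuclideanSpace.single_apply]
  by_cases h : a = τ b
  · have : τ⁻¹ a = b := by simp [h]
    simp [this, h]
  · have : τ⁻¹ a ≠ b := by
      intro hc; exact h (by rw [← hc]; simp)
    simp [this, h]
    intro hc; exact absurd hc this

lemma eNorm_shiftMat_le (τ : Equiv.Perm ι) (t : ι → 𝕂) (h : ∀ b, ‖t b‖ ≤ 1) :
    eNorm (shiftMat τ t) ≤ 1 := by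
  apply ContinuousLinearMap.opNorm_le_bound _ zero_le_one
  intro v
  rw [one_mul, EuclideanSpace.norm_eq, EuclideanSpace.norm_eq]
  apply Real.sqrt_le_sqrt
  have key : ∀ a : ι, ‖(Matrix.toEuclideanCLM (𝕜 := 𝕂) (shiftMat τ t) v) a‖ ^ 2
      ≤ ‖v (τ⁻¹ a)‖ ^ 2 := by
    intro a
    rw [clm_shiftMat_apply]
    have : ‖t (τ⁻¹ a) * v (τ⁻¹ a)‖ ≤ ‖v (τ⁻¹ a)‖ := by
      rw [norm_mul]
      calc ‖t (τ⁻¹ a)‖ * ‖v (τ⁻¹ a)‖ ≤ 1 * ‖v (τ⁻¹ a)‖ :=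
        mul_le_mul_of_nonneg_right (h _) (norm_nonneg _)
      _ = ‖v (τ⁻¹ a)‖ := one_mul _
    exact pow_le_pow_left₀ (norm_nonneg _) this 2
  calc ∑ a, ‖(Matrix.toEuclideanCLM (𝕜 := 𝕂) (shiftMat τ t) v) a‖ ^ 2
      ≤ ∑ a, ‖v (τ⁻¹ a)‖ ^ 2 := Finset.sum_le_sum fun a _ => key a
    _ = ∑ b, ‖v b‖ ^ 2 := Fintype.sum_equiv τ⁻¹ _ _ (fun a => rfl)

lemma one_le_eNorm_shiftMat (τ : Equiv.Perm ι) (t : ι → 𝕂) (b : ι) (hb : t b = 1) :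
    1 ≤ eNorm (shiftMat τ t) := by
  have h1 : Matrix.toEuclideanCLM (𝕜 := 𝕂) (shiftMat τ t) (EuclideanSpace.single b 1)
      = EuclideanSpace.single (τ b) 1 := by
    rw [clm_shiftMat_single, hb, one_mul]
  have h2 := (Matrix.toEuclideanCLM (𝕜 := 𝕂) (shiftMat τ t)).le_opNorm
    (EuclideanSpace.single b (1:𝕂))
  rw [h1, EuclideanSpace.norm_single, EuclideanSpace.norm_single, norm_one, mul_one] at h2
  exact h2

lemma wordProd_zero (A : Fin r → Matrix ι ι 𝕂) (z : Fin 0 → Fin r) :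
    wordProd A z = 1 := by
  simp [wordProd]

lemma wordProd_succ (A : Fin r → Matrix ι ι 𝕂) {m : ℕ} (z : Fin (m+1) → Fin r) :
    wordProd A z = A (z (Fin.last m)) * wordProd A (z ∘ Fin.castSucc) := by
  unfold wordProd
  rw [List.ofFn_succ']
  rw [List.concat_eq_append, List.reverse_append]
  simp [List.prod_cons]

lemma finRotate_pow_apply (m : ℕ) (b : Fin (n'+1)) :
    ((finRotate (n'+1))^m) b = b + (m : Fin (n'+1)) := by
  induction m with
  | zero => simp
  | succ m ih =>
    rw [pow_succ', Equiv.Perm.mul_apply, ih, finRotate_succ_apply]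
    push_cast
    ring

lemma finRotate_pow_n : ((finRotate (n'+1))^(n'+1)) = 1 := by
  ext b
  rw [finRotate_pow_apply]
  simp [Fin.natCast_self]

/-- the per-letter column scalars -/
def sFun (ω : Fin (n'+1) → Fin r) (j : Fin r) (b : Fin (n'+1)) : 𝕂 :=
  if ∃ k, ω k = j then (if ω (finRotate (n'+1) b) = j then 1 else 0)
  else (((j : ℕ) + 2 : ℕ) : 𝕂)⁻¹ * (if ω (finRotate (n'+1) b) = ω 0 then 1 else 0)

/-- the tuple of matrices -/
def mats (ω : Fin (n'+1) → Fin r) : Fin r → Matrix (Fin (n'+1)) (Fin (n'+1)) 𝕂 :=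
  fun j => shiftMat (finRotate (n'+1)) (sFun ω j)

lemma wordProd_mats (ω : Fin (n'+1) → Fin r) {m : ℕ} (z : Fin m → Fin r) :
    wordProd (mats (𝕂 := 𝕂) ω) z = shiftMat ((finRotate (n'+1))^m)
      (fun b => ∏ k : Fin m, sFun ω (z k) (b + ((k : ℕ) : Fin (n'+1)))) := by
  induction m with
  | zero =>
    rw [wordProd_zero]
    simp only [pow_zero]
    rw [← shiftMat_one_fun]
    congr 1
  | succ m ih =>
    rw [wordProd_succ, ih, mats, shiftMat_mul, ← pow_succ']
    have hfun : (fun b => sFun (𝕂 := 𝕂) ω (z (Fin.last m)) ((finRotate (n'+1) ^ m) b)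
          * ∏ k : Fin m, sFun (𝕂 := 𝕂) ω ((z ∘ Fin.castSucc) k) (b + ((k:ℕ) : Fin (n'+1))))
        = fun b => ∏ k : Fin (m+1), sFun (𝕂 := 𝕂) ω (z k) (b + ((k:ℕ) : Fin (n'+1))) := by
      funext b
      rw [Fin.prod_univ_castSucc, finRotate_pow_apply, mul_comm]
      rfl
    rw [hfun]

/-- If `ω` is invariant under a nonzero cyclic shift then it is a power of a shorter word. -/
lemma not_shift_invariant (ω : Fin (n'+1) → Fin r) (hω : ¬ IsPowerOfShorter ω)
    (d : Fin (n'+1)) (hd : d ≠ 0) (H : ∀ x : Fin (n'+1), ω (x + d) = ω x) : False := by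
  let N := n' + 1
  let ω' : ℕ → Fin r := fun j => ω (j : Fin N)
  let Per : ℕ → Prop := fun k => ∀ j : ℕ, ω' (j + k) = ω' j
  have perN : Per N := by
    intro j
    show ω (((j + N : ℕ) : Fin N)) = ω ((j : Fin N))
    congr 1
    apply Fin.ext
    simp [Fin.val_natCast, N]
  have perd : Per d.val := by
    intro j
    show ω (((j + d.val : ℕ) : Fin N)) = ω ((j : Fin N))
    have : ((j + d.val : ℕ) : Fin N) = (j : Fin N) + d := by
      apply Fin.ext
      simp [Fin.val_natCast, Fin.val_add, N]
    rw [this, H]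
  have per_sub : ∀ a b : ℕ, a ≤ b → Per a → Per b → Per (b - a) := by
    intro a b hab ha hb j
    have h1 : ω' (j + (b - a) + a) = ω' (j + (b - a)) := ha _
    have h2 : j + (b - a) + a = j + b := by omega
    rw [h2] at h1
    rw [← h1, hb]
  have per_mul : ∀ a : ℕ, Per a → ∀ t : ℕ, Per (a * t) := by
    intro a ha t
    induction t with
    | zero => intro j; simp
    | succ t ih =>
      intro j
      have : j + a * (t + 1) = (j + a * t) + a := by ring
      rw [this, ha, ih]
  have per_mod : ∀ a b : ℕ, Per a → Per b → Per (a % b) := by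
    intro a b ha hb
    have h1 : Per (b * (a / b)) := per_mul b hb _
    have h2 : b * (a / b) ≤ a := Nat.mul_div_le a b
    have h3 : a % b = a - b * (a / b) := by
      have := Nat.mod_add_div a b
      omega
    rw [h3]
    exact per_sub _ _ h2 h1 ha
  have per_gcd : ∀ a b : ℕ, Per a → Per b → Per (Nat.gcd a b) := by
    intro a
    induction a using Nat.strong_induction_on with
    | _ a ih =>
      intro b ha hb
      cases a with
      | zero => simpa using hb
      | succ a =>
        rw [Nat.gcd_rec]
        exact ih (b % (a+1)) (Nat.mod_lt _ (Nat.succ_pos a)) (a+1)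
          (per_mod b (a+1) hb ha) ha
  have hdpos : 0 < d.val := by
    rcases Nat.eq_zero_or_pos d.val with h | h
    · exact absurd (Fin.ext (by simp [h])) hd
    · exact h
  set q := Nat.gcd d.val N with hq
  have perq : Per q := per_gcd d.val N perd perN
  have hq0 : 0 < q := Nat.gcd_pos_of_pos_right _ (Nat.succ_pos n')
  have hqd : q ≤ d.val := Nat.le_of_dvd hdpos (Nat.gcd_dvd_left _ _)
  have hqn : q < N := lt_of_le_of_lt hqd d.isLt
  have hdvd : q ∣ N := Nat.gcd_dvd_right _ _
  apply hω
  refine ⟨q, hq0, hqn, hdvd, ?_⟩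
  intro j
  have e1 : ω j = ω' j.val := by
    show _ = ω _
    rw [Fin.cast_val_eq_self]
  have e2 : (ω ⟨j.val % q, lt_trans (Nat.mod_lt _ hq0) hqn⟩ : Fin r) = ω' (j.val % q) := by
    show _ = ω _
    congr 1
    apply Fin.ext
    simp [Fin.val_natCast, Nat.mod_eq_of_lt (lt_trans (Nat.mod_lt _ hq0) hqn)]
    exact (Nat.mod_eq_of_lt (lt_trans (Nat.mod_lt _ hq0) hqn)).symm
  rw [e1, e2]
  have : j.val = j.val % q + q * (j.val / q) := by
    have := Nat.mod_add_div j.val q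
    omega
  conv_lhs => rw [this]
  exact per_mul q perq (j.val / q) (j.val % q)

lemma prim_eq (ω : Fin (n'+1) → Fin r) (hω : ¬ IsPowerOfShorter ω) (b b' : Fin (n'+1))
    (h : ∀ k : Fin (n'+1), ω (finRotate (n'+1) (b' + k)) = ω (finRotate (n'+1) (b + k))) :
    b' = b := by
  by_contra hne
  have hd : b' - b ≠ 0 := sub_ne_zero.2 hne
  apply not_shift_invariant ω hω (b' - b) hd
  intro x
  have hx := h (x - b - 1)
  rw [finRotate_succ_apply, finRotate_succ_apply] at hx
  have e1 : b' + (x - b - 1) + 1 = x + (b' - b) := by ring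
  have e2 : b + (x - b - 1) + 1 = x := by ring
  rw [e1, e2] at hx
  exact hx

lemma rot_of_match (ω z : Fin (n'+1) → Fin r) (b : Fin (n'+1))
    (h : ∀ k : Fin (n'+1), z k = ω (finRotate (n'+1) (b + k))) : RotEquiv z ω := by
  refine ⟨b.val + 1, ?_⟩
  intro j
  have hj := h j
  rw [finRotate_succ_apply] at hj
  rw [hj]
  congr 1
  have e : (⟨(j.val + (b.val+1)) % (n'+1), Nat.mod_lt _ j.pos⟩ : Fin (n'+1))
      = ((j.val + (b.val + 1) : ℕ) : Fin (n'+1)) := by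
    apply Fin.ext
    rw [Fin.val_natCast]
  rw [e]
  push_cast [Fin.cast_val_eq_self]
  ring

lemma sFun_eq_one (ω : Fin (n'+1) → Fin r) (j : Fin r) (b : Fin (n'+1))
    (happ : ∃ k, ω k = j) (hmatch : ω (finRotate (n'+1) b) = j) :
    sFun (𝕂 := 𝕂) ω j b = 1 := by
  rw [sFun, if_pos happ, if_pos hmatch]

lemma sFun_app_ne (ω : Fin (n'+1) → Fin r) (j : Fin r) (b : Fin (n'+1))
    (happ : ∃ k, ω k = j) (h : sFun (𝕂 := 𝕂) ω j b ≠ 0) :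
    ω (finRotate (n'+1) b) = j := by
  rw [sFun, if_pos happ] at h
  by_contra hc
  rw [if_neg hc] at h
  exact h rfl

lemma norm_cK_le (j : Fin r) : ‖(((j : ℕ) + 2 : ℕ) : 𝕂)⁻¹‖ ≤ 2⁻¹ := by
  rw [norm_inv, RCLike.norm_natCast]
  have h2 : (2 : ℝ) ≤ ((j : ℕ) + 2 : ℕ) := by
    push_cast
    linarith [Nat.cast_nonneg (α := ℝ) (j : ℕ)]
  calc (((j : ℕ) + 2 : ℕ) : ℝ)⁻¹ ≤ (2 : ℝ)⁻¹ := by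
        apply inv_anti₀ (by norm_num) h2
    _ = 2⁻¹ := rfl

lemma sFun_norm_le (ω : Fin (n'+1) → Fin r) (j : Fin r) (b : Fin (n'+1)) :
    ‖sFun (𝕂 := 𝕂) ω j b‖ ≤ 1 := by
  rw [sFun]
  split_ifs with h1 h2 h3
  · simp
  · simp
  · rw [mul_one]
    calc ‖(((j : ℕ) + 2 : ℕ) : 𝕂)⁻¹‖ ≤ 2⁻¹ := norm_cK_le j
      _ ≤ 1 := by norm_num
  · simp

lemma eNorm_word_le (ω : Fin (n'+1) → Fin r) {m : ℕ} (z : Fin m → Fin r) :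
    eNorm (wordProd (mats (𝕂 := 𝕂) ω) z) ≤ 1 := by
  rw [wordProd_mats]
  apply eNorm_shiftMat_le
  intro b
  calc ‖∏ k : Fin m, sFun (𝕂 := 𝕂) ω (z k) (b + ((k:ℕ) : Fin (n'+1)))‖
      = ∏ k : Fin m, ‖sFun (𝕂 := 𝕂) ω (z k) (b + ((k:ℕ) : Fin (n'+1)))‖ := norm_prod _ _
    _ ≤ 1 := Finset.prod_le_one (fun k _ => norm_nonneg _) (fun k _ => sFun_norm_le ω _ _)

lemma exists_word_norm_one (ω : Fin (n'+1) → Fin r) (m : ℕ) :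
    ∃ z : Fin m → Fin r, 1 ≤ eNorm (wordProd (mats (𝕂 := 𝕂) ω) z) := by
  refine ⟨fun k => ω (finRotate (n'+1) (Fin.last n' + ((k : ℕ) : Fin (n'+1)))), ?_⟩
  rw [wordProd_mats]
  apply one_le_eNorm_shiftMat _ _ (Fin.last n')
  apply Finset.prod_eq_one
  intro k _
  exact sFun_eq_one ω _ _ ⟨_, rfl⟩ rfl

lemma jsr_mats (ω : Fin (n'+1) → Fin r) : jsr (mats (𝕂 := 𝕂) ω) = 1 := by
  have hsup : ∀ m : ℕ, (⨆ z : Fin m → Fin r, eNorm (wordProd (mats (𝕂 := 𝕂) ω) z)) = 1 := by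
    intro m
    haveI : Nonempty (Fin r) := ⟨ω 0⟩
    obtain ⟨z0, hz0⟩ := exists_word_norm_one (𝕂 := 𝕂) ω m
    apply le_antisymm
    · exact ciSup_le fun z => eNorm_word_le ω z
    · exact le_ciSup_of_le (Set.finite_range _).bddAbove z0 hz0
  have h : ∀ m : ℕ+, (⨆ z : Fin (m : ℕ) → Fin r,
      eNorm (wordProd (mats (𝕂 := 𝕂) ω) z)) ^ ((m : ℝ)⁻¹) = 1 := by
    intro m
    rw [hsup, Real.one_rpow]
  have he : (⨅ m : ℕ+, (⨆ z : Fin (m:ℕ) → Fin r,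
      eNorm (wordProd (mats (𝕂:=𝕂) ω) z)) ^ ((m:ℝ)⁻¹)) = ⨅ m : ℕ+, (1:ℝ) := iInf_congr h
  calc jsr (mats (𝕂 := 𝕂) ω)
      = ⨅ m : ℕ+, (⨆ z : Fin (m:ℕ) → Fin r,
        eNorm (wordProd (mats (𝕂:=𝕂) ω) z)) ^ ((m:ℝ)⁻¹) := rfl
    _ = ⨅ m : ℕ+, (1:ℝ) := he
    _ = 1 := ciInf_const

lemma factor_ne_zero {m : ℕ} {f : Fin m → 𝕂} (h : ∏ k, f k ≠ 0) (k : Fin m) : f k ≠ 0 :=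
  fun h0 => h (Finset.prod_eq_zero (Finset.mem_univ k) h0)

lemma wordProd_eq_zero (ω : Fin (n'+1) → Fin r) (z : Fin (n'+1) → Fin r)
    (hall : ∀ k, ∃ a, ω a = z k) (hz : ¬ RotEquiv z ω) :
    wordProd (mats (𝕂 := 𝕂) ω) z = 0 := by
  rw [wordProd_mats]
  have hT : ∀ b, (∏ k : Fin (n'+1), sFun (𝕂 := 𝕂) ω (z k) (b + k)) = 0 := by
    intro b
    by_contra hTb
    apply hz
    apply rot_of_match ω z b
    intro k
    have hk := factor_ne_zero hTb k
    exact (sFun_app_ne ω (z k) _ (hall k) hk).symm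
  ext a b
  simp only [shiftMat, Matrix.of_apply, Matrix.zero_apply, Fin.cast_val_eq_self,
    ite_eq_right_iff]
  intro _
  exact hT b

-- norm facts
lemma isNorm_zero {N : EuclideanSpace 𝕂 ι → ℝ} (h : IsNorm N) : N 0 = 0 := (h.1 0).2 rfl

lemma isNorm_nonneg {N : EuclideanSpace 𝕂 ι → ℝ} (h : IsNorm N) (v : EuclideanSpace 𝕂 ι) :
    0 ≤ N v := by
  have h1 : N (-v) = N v := by
    have := h.2.1 (-1 : 𝕂) v
    simpa using this
  have h2 := h.2.2 v (-v)
  rw [add_neg_cancel, isNorm_zero h, h1] at h2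
  linarith

lemma barb_le (A : Fin r → Matrix ι ι 𝕂) {N : EuclideanSpace 𝕂 ι → ℝ}
    (hN : IsBarabanov A N) (i : Fin r) (v : EuclideanSpace 𝕂 ι) :
    N (Matrix.toEuclideanCLM (𝕜 := 𝕂) (A i) v) ≤ jsr A * N v := by
  rw [hN.2 v]
  exact le_ciSup (f := fun i => N (Matrix.toEuclideanCLM (𝕜 := 𝕂) (A i) v))
    (Set.finite_range _).bddAbove i

def gam (ω : Fin (n'+1) → Fin r) (j : Fin r) : ℝ :=
  if ∃ k, ω k = j then 1 else 2⁻¹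

lemma gam_nonneg (ω : Fin (n'+1) → Fin r) (j : Fin r) : 0 ≤ gam ω j := by
  rw [gam]; split_ifs <;> norm_num

lemma gam_le_one (ω : Fin (n'+1) → Fin r) (j : Fin r) : gam ω j ≤ 1 := by
  rw [gam]; split_ifs <;> norm_num

lemma mats_absent (ω : Fin (n'+1) → Fin r) (j : Fin r) (h : ¬ ∃ k, ω k = j) :
    mats (𝕂 := 𝕂) ω j = (((j : ℕ) + 2 : ℕ) : 𝕂)⁻¹ • mats (𝕂 := 𝕂) ω (ω 0) := by
  have happ : ∃ k, ω k = ω 0 := ⟨0, rfl⟩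
  ext a b
  simp only [mats, shiftMat, Matrix.smul_apply, Matrix.of_apply, smul_eq_mul]
  rw [sFun, sFun, if_neg h, if_pos happ]
  split_ifs with h1 <;> simp

lemma letter_contr (ω : Fin (n'+1) → Fin r) {N : EuclideanSpace 𝕂 (Fin (n'+1)) → ℝ}
    (hN : IsBarabanov (mats (𝕂 := 𝕂) ω) N) (j : Fin r) (v : EuclideanSpace 𝕂 (Fin (n'+1))) :
    N (Matrix.toEuclideanCLM (𝕜 := 𝕂) (mats (𝕂 := 𝕂) ω j) v) ≤ gam ω j * N v := by
  by_cases h : ∃ k, ω k = j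
  · rw [gam, if_pos h, one_mul]
    have := barb_le (mats (𝕂 := 𝕂) ω) hN j v
    rwa [jsr_mats, one_mul] at this
  · rw [gam, if_neg h]
    rw [mats_absent ω j h]
    rw [_root_.map_smul]
    rw [ContinuousLinearMap.smul_apply]
    rw [hN.1.2.1]
    have hc : ‖(((j : ℕ) + 2 : ℕ) : 𝕂)⁻¹‖ ≤ 2⁻¹ := norm_cK_le j
    have h2 : N (Matrix.toEuclideanCLM (𝕜 := 𝕂) (mats (𝕂 := 𝕂) ω (ω 0)) v) ≤ N v := by
      have := barb_le (mats (𝕂 := 𝕂) ω) hN (ω 0) v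
      rwa [jsr_mats, one_mul] at this
    calc ‖(((j : ℕ) + 2 : ℕ) : 𝕂)⁻¹‖ * N (Matrix.toEuclideanCLM (𝕜 := 𝕂) (mats (𝕂 := 𝕂) ω (ω 0)) v)
        ≤ 2⁻¹ * N v := by
          apply mul_le_mul hc h2 (isNorm_nonneg hN.1 _) (by norm_num)

lemma word_contr (ω : Fin (n'+1) → Fin r) {N : EuclideanSpace 𝕂 (Fin (n'+1)) → ℝ}
    (hN : IsBarabanov (mats (𝕂 := 𝕂) ω) N) {m : ℕ} (z : Fin m → Fin r)
    (v : EuclideanSpace 𝕂 (Fin (n'+1))) :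
    N (Matrix.toEuclideanCLM (𝕜 := 𝕂) (wordProd (mats (𝕂 := 𝕂) ω) z) v)
      ≤ (∏ k, gam ω (z k)) * N v := by
  induction m with
  | zero =>
    rw [wordProd_zero]
    simp only [_root_.map_one, ContinuousLinearMap.one_apply]
    simp
  | succ m ih =>
    rw [wordProd_succ, _root_.map_mul, ContinuousLinearMap.mul_apply]
    calc N (Matrix.toEuclideanCLM (𝕜 := 𝕂) (mats (𝕂 := 𝕂) ω (z (Fin.last m)))
          (Matrix.toEuclideanCLM (𝕜 := 𝕂) (wordProd (mats (𝕂 := 𝕂) ω) (z ∘ Fin.castSucc)) v))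
        ≤ gam ω (z (Fin.last m)) * N (Matrix.toEuclideanCLM (𝕜 := 𝕂)
            (wordProd (mats (𝕂 := 𝕂) ω) (z ∘ Fin.castSucc)) v) := letter_contr ω hN _ _
      _ ≤ gam ω (z (Fin.last m)) * ((∏ k, gam ω ((z ∘ Fin.castSucc) k)) * N v) :=
          mul_le_mul_of_nonneg_left (ih _) (gam_nonneg ω _)
      _ = (∏ k, gam ω (z k)) * N v := by
          rw [Fin.prod_univ_castSucc]
          simp only [Function.comp]
          ring

lemma sfh (ω : Fin (n'+1) → Fin r) : StrongFinHyp (mats (𝕂 := 𝕂) ω) ω := by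
  intro N hN z hz
  rw [jsr_mats, one_pow]
  have hb : ∀ x ∈ {x : ℝ | ∃ v, N v ≤ 1 ∧
      x = N (Matrix.toEuclideanCLM (𝕜 := 𝕂) (wordProd (mats (𝕂 := 𝕂) ω) z) v)}, x ≤ 2⁻¹ := by
    rintro x ⟨v, hv, rfl⟩
    by_cases hall : ∀ k, ∃ a, ω a = z k
    · rw [wordProd_eq_zero ω z hall hz]
      rw [_root_.map_zero, ContinuousLinearMap.zero_apply, isNorm_zero hN.1]
      norm_num
    · push_neg at hall
      obtain ⟨k0, hk0⟩ := hall
      have hprod : (∏ k, gam ω (z k)) ≤ 2⁻¹ := by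
        rw [← Finset.mul_prod_erase Finset.univ _ (Finset.mem_univ k0)]
        have h1 : gam ω (z k0) = 2⁻¹ := by
          rw [gam, if_neg (by exact fun ⟨a, ha⟩ => hk0 a ha)]
        rw [h1]
        calc (2:ℝ)⁻¹ * ∏ k ∈ Finset.univ.erase k0, gam ω (z k)
            ≤ 2⁻¹ * 1 := by
              apply mul_le_mul_of_nonneg_left _ (by norm_num)
              exact Finset.prod_le_one (fun k _ => gam_nonneg ω _) (fun k _ => gam_le_one ω _)
          _ = 2⁻¹ := mul_one _
      calc N (Matrix.toEuclideanCLM (𝕜 := 𝕂) (wordProd (mats (𝕂 := 𝕂) ω) z) v)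
          ≤ (∏ k, gam ω (z k)) * N v := word_contr ω hN z v
        _ ≤ 2⁻¹ * 1 := mul_le_mul hprod hv (isNorm_nonneg hN.1 _) (by norm_num)
        _ ≤ 2⁻¹ := by norm_num
  calc opNormWrt N (wordProd (mats (𝕂 := 𝕂) ω) z) ≤ 2⁻¹ := Real.sSup_le hb (by norm_num)
    _ < 1 := by norm_num

lemma mem_invariant (A : Fin r → Matrix ι ι 𝕂) (V : Submodule 𝕂 (EuclideanSpace 𝕂 ι))
    (hV : ∀ i, ∀ v ∈ V, Matrix.toEuclideanCLM (𝕜 := 𝕂) (A i) v ∈ V)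
    {m : ℕ} (z : Fin m → Fin r) (v : EuclideanSpace 𝕂 ι) (hv : v ∈ V) :
    Matrix.toEuclideanCLM (𝕜 := 𝕂) (wordProd A z) v ∈ V := by
  induction m with
  | zero =>
    rw [wordProd_zero]
    simpa [_root_.map_one, ContinuousLinearMap.one_apply] using hv
  | succ m ih =>
    rw [wordProd_succ, _root_.map_mul, ContinuousLinearMap.mul_apply]
    exact hV _ _ (ih (z ∘ Fin.castSucc))

lemma irred (ω : Fin (n'+1) → Fin r) (hω : ¬ IsPowerOfShorter ω) :
    IsIrreducible (mats (𝕂 := 𝕂) ω) := by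
  intro V hV
  rcases eq_or_ne V ⊥ with h | h
  · left; exact h
  right
  obtain ⟨v, hvV, hv0⟩ := Submodule.ne_bot_iff V |>.1 h
  have hb : ∃ b, v b ≠ 0 := by
    by_contra hc
    push_neg at hc
    exact hv0 (PiLp.ext fun b => hc b)
  obtain ⟨b, hvb⟩ := hb
  set u : Fin (n'+1) → Fin r :=
    fun k => ω (finRotate (n'+1) (b + ((k : ℕ) : Fin (n'+1)))) with hu
  set T : Fin (n'+1) → 𝕂 :=
    fun b' => ∏ k : Fin (n'+1), sFun (𝕂 := 𝕂) ω (u k) (b' + ((k:ℕ) : Fin (n'+1))) with hTdef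
  have hword : wordProd (mats (𝕂 := 𝕂) ω) u = shiftMat 1 T := by
    rw [wordProd_mats, finRotate_pow_n]
  have hTb : T b = 1 := by
    apply Finset.prod_eq_one
    intro k _
    exact sFun_eq_one ω _ _ ⟨_, rfl⟩ rfl
  have hTo : ∀ b', b' ≠ b → T b' = 0 := by
    intro b' hb'
    by_contra hT
    apply hb'
    apply prim_eq ω hω b b'
    intro k
    have hk := factor_ne_zero hT k
    have h1 := sFun_app_ne ω (u k) _ ⟨_, rfl⟩ hk
    rw [Fin.cast_val_eq_self] at h1
    rw [h1, hu]
    simp only []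
    rw [Fin.cast_val_eq_self]
  have h1 : Matrix.toEuclideanCLM (𝕜 := 𝕂) (wordProd (mats (𝕂 := 𝕂) ω) u) v ∈ V :=
    mem_invariant _ V hV u v hvV
  have h2 : Matrix.toEuclideanCLM (𝕜 := 𝕂) (wordProd (mats (𝕂 := 𝕂) ω) u) v
      = EuclideanSpace.single b (v b) := by
    apply (WithLp.equiv 2 _).injective
    funext a
    simp only [WithLp.equiv_apply]
    rw [hword, clm_shiftMat_apply, inv_one, Equiv.Perm.one_apply,
      EuclideanSpace.single_apply]
    by_cases ha : a = b
    · rw [if_pos ha, ha, hTb, one_mul]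
    · rw [if_neg ha, hTo a ha, zero_mul]
  rw [h2] at h1
  have h3 : EuclideanSpace.single b (1:𝕂) ∈ V := by
    have := V.smul_mem ((v b)⁻¹) h1
    have he : (v b)⁻¹ • EuclideanSpace.single b (v b) = EuclideanSpace.single b (1:𝕂) := by
      apply (WithLp.equiv 2 _).injective
      funext a
      simp only [WithLp.equiv_apply, PiLp.smul_apply, EuclideanSpace.single_apply,
        smul_eq_mul]
      by_cases ha : a = b
      · rw [if_pos ha, if_pos ha, inv_mul_cancel₀ hvb]
      · rw [if_neg ha, if_neg ha, mul_zero]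
    rwa [he] at this
  have h4 : ∀ t : ℕ, EuclideanSpace.single (b + ((t : ℕ) : Fin (n'+1))) (1:𝕂) ∈ V := by
    intro t
    induction t with
    | zero => simpa using h3
    | succ t iht =>
      have hstep := hV (ω (finRotate (n'+1) (b + ((t : ℕ) : Fin (n'+1))))) _ iht
      have heq : Matrix.toEuclideanCLM (𝕜 := 𝕂)
          (mats (𝕂 := 𝕂) ω (ω (finRotate (n'+1) (b + ((t : ℕ) : Fin (n'+1))))))
          (EuclideanSpace.single (b + ((t : ℕ) : Fin (n'+1))) (1:𝕂))
          = EuclideanSpace.single (b + (((t+1) : ℕ) : Fin (n'+1))) (1:𝕂) := by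
        rw [mats, clm_shiftMat_single]
        rw [sFun_eq_one ω _ _ ⟨_, rfl⟩ rfl, one_mul]
        congr 1
        rw [finRotate_succ_apply]
        push_cast
        ring
      rwa [heq] at hstep
  have h5 : ∀ a : Fin (n'+1), EuclideanSpace.single a (1:𝕂) ∈ V := by
    intro a
    have := h4 ((a - b).val)
    rwa [Fin.cast_val_eq_self, show b + (a - b) = a by ring] at this
  have hle : Submodule.span 𝕂 (Set.range
      ((EuclideanSpace.basisFun (Fin (n'+1)) 𝕂).toBasis : _ → EuclideanSpace 𝕂 (Fin (n'+1)))) ≤ V := by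
    apply Submodule.span_le.2
    rintro _ ⟨i, rfl⟩
    rw [OrthonormalBasis.coe_toBasis, EuclideanSpace.basisFun_apply]
    exact h5 i
  rw [Module.Basis.span_eq] at hle
  exact le_antisymm le_top hle

lemma cK_ne_zero (j : Fin r) : (((j : ℕ) + 2 : ℕ) : 𝕂)⁻¹ ≠ 0 := by
  apply inv_ne_zero
  have hne : ((j : ℕ) + 2 : ℕ) ≠ 0 := by omega
  exact Nat.cast_ne_zero.2 hne

lemma cK_ne_one (j : Fin r) : (((j : ℕ) + 2 : ℕ) : 𝕂)⁻¹ ≠ 1 := by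
  intro h
  rw [inv_eq_one] at h
  have : ((j : ℕ) + 2 : ℕ) = 1 := Nat.cast_injective (by simpa using h)
  omega

lemma mats_injective (ω : Fin (n'+1) → Fin r) : Function.Injective (mats (𝕂 := 𝕂) ω) := by
  intro j j' hjj
  have hs : ∀ b, sFun (𝕂 := 𝕂) ω j b = sFun (𝕂 := 𝕂) ω j' b := by
    intro b
    have := congrFun (congrFun hjj (finRotate (n'+1) b)) b
    simpa [mats, shiftMat] using this
  by_contra hne
  by_cases hj : ∃ k, ω k = j
  · by_cases hj' : ∃ k, ω k = j'
    · obtain ⟨k, hk⟩ := hj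
      have hb := hs ((finRotate (n'+1))⁻¹ k)
      rw [sFun, sFun] at hb
      rw [if_pos (⟨k, hk⟩ : ∃ a, ω a = j), if_pos hj'] at hb
      rw [Equiv.Perm.inv_def, Equiv.apply_symm_apply, hk] at hb
      rw [if_pos rfl] at hb
      rw [if_neg (fun hc : j = j' => hne hc)] at hb
      exact one_ne_zero hb
    · have hb := hs ((finRotate (n'+1))⁻¹ 0)
      rw [sFun, sFun] at hb
      rw [if_pos hj, if_neg hj'] at hb
      rw [Equiv.Perm.inv_def, Equiv.apply_symm_apply] at hb
      rw [if_pos rfl, mul_one] at hb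
      split_ifs at hb
      · exact cK_ne_one j' hb.symm
      · exact cK_ne_zero j' hb.symm
  · by_cases hj' : ∃ k, ω k = j'
    · have hb := hs ((finRotate (n'+1))⁻¹ 0)
      rw [sFun, sFun] at hb
      rw [if_neg hj, if_pos hj'] at hb
      rw [Equiv.Perm.inv_def, Equiv.apply_symm_apply] at hb
      rw [if_pos rfl, mul_one] at hb
      split_ifs at hb
      · exact cK_ne_one j hb
      · exact cK_ne_zero j hb
    · have hb := hs ((finRotate (n'+1))⁻¹ 0)
      rw [sFun, sFun] at hb
      rw [if_neg hj, if_neg hj'] at hb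
      rw [Equiv.Perm.inv_def, Equiv.apply_symm_apply] at hb
      rw [if_pos rfl, mul_one, mul_one] at hb
      have h1 := inv_injective hb
      have h2 : ((j : ℕ) + 2 : ℕ) = ((j' : ℕ) + 2 : ℕ) := Nat.cast_injective h1
      exact hne (Fin.ext (by omega))

lemma wordProd_omega (ω : Fin (n'+1) → Fin r) (hω : ¬ IsPowerOfShorter ω) :
    wordProd (mats (𝕂 := 𝕂) ω) ω
      = Matrix.diagonal (fun b => if b = Fin.last n' then (1:𝕂) else 0) := by
  rw [wordProd_mats, finRotate_pow_n, shiftMat_diagonal]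
  have hfun : (fun b => ∏ k : Fin (n'+1), sFun (𝕂 := 𝕂) ω (ω k) (b + ((k:ℕ) : Fin (n'+1))))
      = fun b => if b = Fin.last n' then (1:𝕂) else 0 := by
    funext b
    by_cases hb : b = Fin.last n'
    · subst hb
      rw [if_pos rfl]
      apply Finset.prod_eq_one
      intro k _
      apply sFun_eq_one ω _ _ ⟨k, rfl⟩
      rw [Fin.cast_val_eq_self]
      congr 1
      rw [finRotate_succ_apply]
      calc Fin.last n' + k + 1 = k + (Fin.last n' + 1) := by ring
        _ = k + 0 := by rw [Fin.last_add_one]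
        _ = k := add_zero k
    · rw [if_neg hb]
      by_contra hT
      apply hb
      apply prim_eq ω hω (Fin.last n') b
      intro k
      have hk := factor_ne_zero hT k
      have h1 := sFun_app_ne ω (ω k) _ ⟨k, rfl⟩ hk
      rw [Fin.cast_val_eq_self] at h1
      rw [h1]
      rw [finRotate_succ_apply]
      congr 1
      calc k = k + 0 := (add_zero k).symm
        _ = k + (Fin.last n' + 1) := by rw [Fin.last_add_one]
        _ = Fin.last n' + k + 1 := by ring
  rw [hfun]

lemma rank_omega (ω : Fin (n'+1) → Fin r) (hω : ¬ IsPowerOfShorter ω) :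
    (wordProd (mats (𝕂 := 𝕂) ω) ω).rank = 1 := by
  classical
  rw [wordProd_omega ω hω, Matrix.rank_diagonal]
  rw [Fintype.card_eq_one_iff]
  refine ⟨⟨Fin.last n', by simp⟩, ?_⟩
  rintro ⟨y, hy⟩
  apply Subtype.ext
  show y = Fin.last n'
  by_contra hyc
  exact hy (by simp [hyc])

end JSRAux
end Aux


open JSRPaper in
/-- **Proposition 1.** If the word `ω ∈ {1,…,r}^n` is not a power of a shorter word,
then there is an irreducible `r`-tuple of `n × n` matrices over `𝕂` satisfying the
strong finiteness hypothesis with characteristic word `ω`, with pairwise distinct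
matrices, such that `A_{ω_n} ⋯ A_{ω_1}` has rank one. -/
theorem stmt_1 {𝕂 : Type*} [RCLike 𝕂] {r n : ℕ} (hr : 0 < r) (hn : 0 < n)
    (ω : Fin n → Fin r) (hω : ¬ IsPowerOfShorter ω) :
    ∃ A : Fin r → Matrix (Fin n) (Fin n) 𝕂,
      IsIrreducible A ∧ StrongFinHyp A ω ∧ Function.Injective A ∧
        (wordProd A ω).rank = 1 := by
  obtain ⟨n', rfl⟩ : ∃ n', n = n' + 1 := ⟨n - 1, (Nat.succ_pred_eq_of_pos hn).symm⟩
  exact ⟨JSRAux.mats ω, JSRAux.irred ω hω, JSRAux.sfh ω, JSRAux.mats_injective ω,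
    JSRAux.rank_omega ω hω⟩
end
end

section
/- Let 𝕂 be ℝ or ℂ and suppose that the r-tuple 𝒜 = (A_1,…,A_r) of d×d matrices over 𝕂 is relatively product bounded and satisfies both the unbounded agreements property and the rank one property. Then any two Barabanov norms for 𝒜 are proportional: if ‖·‖_1 and ‖·‖_2 are Barabanov norms for 𝒜 then there is c > 0 with ‖v‖_2 = c‖v‖_1 for all v ∈ 𝕂^d. -/
open Filter Topology

noncomputable section

namespace JSRPaper

variable {𝕂 : Type*} [RCLike 𝕂] {ι : Type*} [Fintype ι] [DecidableEq ι] {r : ℕ}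

section UBN
variable {𝕂 : Type*} [RCLike 𝕂] {d : ℕ}


theorem IsNorm.zero {N : EuclideanSpace 𝕂 (Fin d) → ℝ} (hN : IsNorm N) : N 0 = 0 :=
  (hN.1 0).mpr rfl

theorem IsNorm.neg {N : EuclideanSpace 𝕂 (Fin d) → ℝ} (hN : IsNorm N) (v) : N (-v) = N v := by
  have := hN.2.1 (-1) v
  simpa using this

theorem IsNorm.nonneg {N : EuclideanSpace 𝕂 (Fin d) → ℝ} (hN : IsNorm N) (v) : 0 ≤ N v := by
  have h := hN.2.2 v (-v)
  rw [add_neg_cancel, hN.zero, hN.neg] at h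
  linarith

theorem IsNorm.smul_real {N : EuclideanSpace 𝕂 (Fin d) → ℝ} (hN : IsNorm N) (x : ℝ) (v) :
    N (x • v) = |x| * N v := by
  rw [RCLike.real_smul_eq_coe_smul (K := 𝕂), hN.2.1]
  simp

theorem IsNorm.sum_le {N : EuclideanSpace 𝕂 (Fin d) → ℝ} (hN : IsNorm N) {α : Type*}
    (s : Finset α) (f : α → EuclideanSpace 𝕂 (Fin d)) :
    N (∑ i ∈ s, f i) ≤ ∑ i ∈ s, N (f i) := by
  classical
  induction s using Finset.induction with
  | empty => simp [hN.zero]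
  | insert _ _ h ih =>
    rw [Finset.sum_insert h, Finset.sum_insert h]
    exact (hN.2.2 _ _).trans (by linarith)

theorem coord_le_norm (v : EuclideanSpace 𝕂 (Fin d)) (i : Fin d) : ‖v i‖ ≤ ‖v‖ := by
  rw [EuclideanSpace.norm_eq]
  have : ‖v i‖ = Real.sqrt (‖v i‖ ^ 2) := by
    rw [Real.sqrt_sq (norm_nonneg _)]
  rw [this]
  apply Real.sqrt_le_sqrt
  exact Finset.single_le_sum (f := fun j => ‖v j‖ ^ 2) (fun j _ => sq_nonneg _) (Finset.mem_univ i)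

theorem IsNorm.upper {N : EuclideanSpace 𝕂 (Fin d) → ℝ} (hN : IsNorm N) :
    ∃ b : ℝ, 0 ≤ b ∧ ∀ v, N v ≤ b * ‖v‖ := by
  refine ⟨∑ i, N (EuclideanSpace.single i (1 : 𝕂)), Finset.sum_nonneg fun i _ => hN.nonneg _, fun v => ?_⟩
  have hv : v = ∑ i, v i • EuclideanSpace.single i (1 : 𝕂) := by
    have := (EuclideanSpace.basisFun (Fin d) 𝕂).sum_repr v
    simpa [EuclideanSpace.basisFun_repr, EuclideanSpace.basisFun_apply] using this.symm
  calc N v = N (∑ i, v i • EuclideanSpace.single i (1 : 𝕂)) := by rw [← hv]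
    _ ≤ ∑ i, N (v i • EuclideanSpace.single i (1 : 𝕂)) := hN.sum_le _ _
    _ = ∑ i, ‖v i‖ * N (EuclideanSpace.single i (1 : 𝕂)) := by
        simp [hN.2.1]
    _ ≤ ∑ i, ‖v‖ * N (EuclideanSpace.single i (1 : 𝕂)) := by
        apply Finset.sum_le_sum
        intro i _
        exact mul_le_mul_of_nonneg_right (coord_le_norm v i) (hN.nonneg _)
    _ = (∑ i, N (EuclideanSpace.single i (1 : 𝕂))) * ‖v‖ := by rw [← Finset.mul_sum, mul_comm]

theorem IsNorm.continuous {N : EuclideanSpace 𝕂 (Fin d) → ℝ} (hN : IsNorm N) :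
    Continuous N := by
  obtain ⟨b, hb0, hb⟩ := hN.upper
  rw [Metric.continuous_iff]
  intro v ε hε
  refine ⟨ε / (b + 1), by positivity, fun u hu => ?_⟩
  have h1 : N u - N v ≤ N (u - v) := by
    have := hN.2.2 (u - v) v
    rw [sub_add_cancel] at this; linarith
  have h2 : N v - N u ≤ N (u - v) := by
    have := hN.2.2 (v - u) u
    rw [sub_add_cancel] at this
    have hnn : N (v - u) = N (u - v) := by rw [← hN.neg (u - v)]; simp
    linarith
  have h3 : N (u - v) ≤ b * ‖u - v‖ := hb _
  have h4 : b * ‖u - v‖ < ε := by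
    have h5 : ‖u - v‖ < ε / (b + 1) := by rwa [← dist_eq_norm]
    have h6 : (b+1) * ‖u - v‖ < (b+1) * (ε / (b+1)) :=
      mul_lt_mul_of_pos_left h5 (by positivity)
    have h7 : (b+1) * (ε / (b+1)) = ε := by field_simp
    nlinarith [norm_nonneg (u - v)]
  rw [Real.dist_eq]
  rw [abs_sub_lt_iff]
  constructor <;> linarith

theorem IsNorm.lower {N : EuclideanSpace 𝕂 (Fin d) → ℝ} (hN : IsNorm N) (hd : 0 < d) :
    ∃ a : ℝ, 0 < a ∧ ∀ v, a * ‖v‖ ≤ N v := by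
  set S := Metric.sphere (0 : EuclideanSpace 𝕂 (Fin d)) 1 with hS
  have hcpt : IsCompact S := isCompact_sphere _ _
  have hne : S.Nonempty := by
    refine ⟨EuclideanSpace.single ⟨0, hd⟩ (1 : 𝕂), ?_⟩
    rw [hS, mem_sphere_iff_norm]
    simp [EuclideanSpace.norm_single]
  obtain ⟨u, huS, hmin⟩ := hcpt.exists_isMinOn hne hN.continuous.continuousOn
  have hu1 : ‖u‖ = 1 := by
    have h := huS; rw [hS] at h; simpa using h
  have hu0 : u ≠ 0 := by intro h; rw [h] at hu1; simp at hu1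
  have ha : 0 < N u := lt_of_le_of_ne (hN.nonneg u) fun h => hu0 ((hN.1 u).mp h.symm)
  refine ⟨N u, ha, fun v => ?_⟩
  rcases eq_or_ne v 0 with rfl | hv
  · simp [hN.zero]
  · have hnv : (0:ℝ) < ‖v‖ := norm_pos_iff.mpr hv
    have hmem : (‖v‖⁻¹ • v) ∈ S := by
      simp [hS, norm_smul, abs_of_pos (inv_pos.mpr hnv), inv_mul_cancel₀ hnv.ne']
    have hle : N u ≤ N (‖v‖⁻¹ • v) := hmin hmem
    have hNv : N (‖v‖⁻¹ • v) = ‖v‖⁻¹ * N v := by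
      rw [hN.smul_real, abs_of_pos (inv_pos.mpr hnv)]
    rw [hNv] at hle
    have hinv : ‖v‖⁻¹ * ‖v‖ = 1 := inv_mul_cancel₀ hnv.ne'
    calc N u * ‖v‖ ≤ (‖v‖⁻¹ * N v) * ‖v‖ := mul_le_mul_of_nonneg_right hle hnv.le
      _ = N v := by rw [mul_comm (‖v‖⁻¹), mul_assoc, hinv, mul_one]


section Words
variable {𝕂 : Type*} [RCLike 𝕂] {r d : ℕ}

theorem wordProd_nil (A : Fin r → Matrix (Fin d) (Fin d) 𝕂) (i : Fin 0 → Fin r) :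
    wordProd A i = 1 := by
  simp [wordProd]

theorem wordProd_succ (A : Fin r → Matrix (Fin d) (Fin d) 𝕂) {n : ℕ} (j : Fin (n+1) → Fin r) :
    wordProd A j = A (j (Fin.last n)) * wordProd A (fun k : Fin n => j k.castSucc) := by
  rw [wordProd, List.ofFn_succ', List.concat_eq_append, List.reverse_append]
  simp [wordProd]

theorem seqProd_zero (A : Fin r → Matrix (Fin d) (Fin d) 𝕂) (i : ℕ → Fin r) :
    seqProd A i 0 = 1 :=
  wordProd_nil A _

theorem seqProd_succ (A : Fin r → Matrix (Fin d) (Fin d) 𝕂) (i : ℕ → Fin r) (n : ℕ) :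
    seqProd A i (n+1) = A (i (n+1)) * seqProd A i n := by
  rw [seqProd, wordProd_succ]
  rfl

theorem seqProd_add (A : Fin r → Matrix (Fin d) (Fin d) 𝕂) (i : ℕ → Fin r) (m n : ℕ) :
    seqProd A i (m + n) = wordProd A (fun k : Fin n => i (m + (k.val + 1))) * seqProd A i m := by
  induction n with
  | zero =>
    show seqProd A i m = _
    rw [wordProd_nil, one_mul]
  | succ n ih =>
    show seqProd A i ((m + n) + 1) = _
    rw [seqProd_succ, ih, wordProd_succ A (fun k : Fin (n+1) => i (m + (k.val + 1))), mul_assoc]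
    rfl

theorem clm_mul_apply (M P : Matrix (Fin d) (Fin d) 𝕂) (v : EuclideanSpace 𝕂 (Fin d)) :
    Matrix.toEuclideanCLM (𝕜 := 𝕂) (M * P) v =
      Matrix.toEuclideanCLM (𝕜 := 𝕂) M (Matrix.toEuclideanCLM (𝕜 := 𝕂) P v) := by
  rw [map_mul]
  rfl

end Words

section JsrPos
variable {𝕂 : Type*} [RCLike 𝕂] {r d : ℕ}

theorem jsr_le_step1 (A : Fin r → Matrix (Fin d) (Fin d) 𝕂) :
    jsr A ≤ ⨆ i : Fin 1 → Fin r, eNorm (wordProd A i) := by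
  have hbdd : BddBelow (Set.range fun n : ℕ+ =>
      (⨆ i : Fin (n : ℕ) → Fin r, eNorm (wordProd A i)) ^ ((n : ℝ)⁻¹)) := by
    refine ⟨0, ?_⟩
    rintro x ⟨n, rfl⟩
    exact Real.rpow_nonneg (Real.iSup_nonneg fun i => norm_nonneg _) _
  have h := ciInf_le hbdd (1 : ℕ+)
  simp at h
  exact h

theorem r_pos_of_jsr_pos (A : Fin r → Matrix (Fin d) (Fin d) 𝕂) (h : 0 < jsr A) : 0 < r := by
  rcases Nat.eq_zero_or_pos r with hr | hr
  · exfalso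
    subst hr
    have h1 := jsr_le_step1 A
    have h2 : (⨆ i : Fin 1 → Fin 0, eNorm (wordProd A i)) = 0 := by
      haveI : IsEmpty (Fin 1 → Fin 0) := ⟨fun f => (f 0).elim0⟩
      rw [iSup, Set.range_eq_empty, Real.sSup_empty]
    rw [h2] at h1
    linarith
  · exact hr

theorem d_pos_of_jsr_pos (A : Fin r → Matrix (Fin d) (Fin d) 𝕂) (h : 0 < jsr A) : 0 < d := by
  rcases Nat.eq_zero_or_pos d with hd | hd
  · exfalso
    subst hd
    have h1 := jsr_le_step1 A
    have hx : ∀ w : EuclideanSpace 𝕂 (Fin 0), w = 0 := fun w =>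
      (WithLp.equiv 2 _).injective (funext fun j => j.elim0)
    have h2 : (⨆ i : Fin 1 → Fin r, eNorm (wordProd A i)) ≤ 0 := by
      refine Real.iSup_le (fun i => ?_) le_rfl
      refine ContinuousLinearMap.opNorm_le_bound _ le_rfl fun x => ?_
      rw [hx (Matrix.toEuclideanCLM (𝕜 := 𝕂) (wordProd A i) x), norm_zero]
      positivity
    linarith
  · exact hd

end JsrPos

section Bara
variable {𝕂 : Type*} [RCLike 𝕂] {r d : ℕ}

theorem bara_le {A : Fin r → Matrix (Fin d) (Fin d) 𝕂} {N : EuclideanSpace 𝕂 (Fin d) → ℝ}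
    (hN : IsBarabanov A N) (v : EuclideanSpace 𝕂 (Fin d)) (i : Fin r) :
    N (Matrix.toEuclideanCLM (𝕜 := 𝕂) (A i) v) ≤ jsr A * N v := by
  rw [hN.2 v]
  exact le_ciSup (f := fun i : Fin r => N (Matrix.toEuclideanCLM (𝕜 := 𝕂) (A i) v))
    (Set.finite_range _).bddAbove i

theorem bara_exists {A : Fin r → Matrix (Fin d) (Fin d) 𝕂} {N : EuclideanSpace 𝕂 (Fin d) → ℝ}
    (hr : 0 < r) (hN : IsBarabanov A N) (v : EuclideanSpace 𝕂 (Fin d)) :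
    ∃ i : Fin r, N (Matrix.toEuclideanCLM (𝕜 := 𝕂) (A i) v) = jsr A * N v := by
  haveI : Nonempty (Fin r) := ⟨⟨0, hr⟩⟩
  obtain ⟨i, hi⟩ := Finite.exists_max fun i : Fin r =>
    N (Matrix.toEuclideanCLM (𝕜 := 𝕂) (A i) v)
  refine ⟨i, le_antisymm (bara_le hN v i) ?_⟩
  rw [hN.2 v]
  exact ciSup_le hi

end Bara

section Traj
variable {𝕂 : Type*} [RCLike 𝕂] {r d : ℕ}

theorem matrix_real_smul_eq_coe (x : ℝ) (Q : Matrix (Fin d) (Fin d) 𝕂) :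
    (x • Q) = ((x : 𝕂) • Q) := by
  ext i j
  simp [Matrix.smul_apply, RCLike.real_smul_eq_coe_mul, smul_eq_mul]

theorem clm_real_smul (x : ℝ) (Q : Matrix (Fin d) (Fin d) 𝕂) :
    Matrix.toEuclideanCLM (𝕜 := 𝕂) (x • Q) =
      ((x : 𝕂)) • Matrix.toEuclideanCLM (𝕜 := 𝕂) Q := by
  rw [matrix_real_smul_eq_coe, map_smul]

theorem exists_traj (A : Fin r → Matrix (Fin d) (Fin d) 𝕂) (hr : 0 < r)
    {P : EuclideanSpace 𝕂 (Fin d) → Prop} (N₁ N₂ : EuclideanSpace 𝕂 (Fin d) → ℝ) (ρ : ℝ)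
    (hstep : ∀ v, P v → ∃ j : Fin r,
      P (Matrix.toEuclideanCLM (𝕜 := 𝕂) (A j) v) ∧
      N₁ (Matrix.toEuclideanCLM (𝕜 := 𝕂) (A j) v) = ρ * N₁ v ∧
      N₂ (Matrix.toEuclideanCLM (𝕜 := 𝕂) (A j) v) = ρ * N₂ v)
    (u : EuclideanSpace 𝕂 (Fin d)) (hu : P u) :
    ∃ i : ℕ → Fin r, ∀ n : ℕ,
      P (Matrix.toEuclideanCLM (𝕜 := 𝕂) (seqProd A i n) u) ∧
      N₁ (Matrix.toEuclideanCLM (𝕜 := 𝕂) (seqProd A i n) u) = ρ ^ n * N₁ u ∧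
      N₂ (Matrix.toEuclideanCLM (𝕜 := 𝕂) (seqProd A i n) u) = ρ ^ n * N₂ u := by
  classical
  let g : {v : EuclideanSpace 𝕂 (Fin d) // P v} → Fin r × {v : EuclideanSpace 𝕂 (Fin d) // P v} :=
    fun q => ⟨(hstep q.1 q.2).choose,
      ⟨Matrix.toEuclideanCLM (𝕜 := 𝕂) (A (hstep q.1 q.2).choose) q.1,
        (hstep q.1 q.2).choose_spec.1⟩⟩
  let t : ℕ → {v : EuclideanSpace 𝕂 (Fin d) // P v} := fun n => (fun q => (g q).2)^[n] ⟨u, hu⟩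
  let i : ℕ → Fin r := fun n => Nat.casesOn n ⟨0, hr⟩ (fun m => (g (t m)).1)
  have key : ∀ n : ℕ, (t n).1 = Matrix.toEuclideanCLM (𝕜 := 𝕂) (seqProd A i n) u ∧
      N₁ ((t n).1) = ρ ^ n * N₁ u ∧ N₂ ((t n).1) = ρ ^ n * N₂ u := by
    intro n
    induction n with
    | zero =>
      have ht0 : t 0 = ⟨u, hu⟩ := rfl
      refine ⟨?_, by rw [ht0]; simp, by rw [ht0]; simp⟩
      show u = _
      rw [seqProd_zero, map_one]
      rfl
    | succ n ih =>
      have ht : t (n+1) = (g (t n)).2 := Function.iterate_succ_apply' _ _ _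
      have hi : i (n+1) = (g (t n)).1 := rfl
      have hval : (t (n+1)).1 =
          Matrix.toEuclideanCLM (𝕜 := 𝕂) (A (i (n+1))) ((t n).1) := by
        rw [ht, hi]
      have hspec := (hstep (t n).1 (t n).2).choose_spec
      refine ⟨?_, ?_, ?_⟩
      · rw [hval, seqProd_succ, clm_mul_apply, ih.1]
      · rw [hval, hi]
        show N₁ (Matrix.toEuclideanCLM (𝕜 := 𝕂) (A (hstep (t n).1 (t n).2).choose) ((t n).1)) = _
        rw [hspec.2.1, ih.2.1, pow_succ]
        ring
      · rw [hval, hi]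
        show N₂ (Matrix.toEuclideanCLM (𝕜 := 𝕂) (A (hstep (t n).1 (t n).2).choose) ((t n).1)) = _
        rw [hspec.2.2, ih.2.2, pow_succ]
        ring
  refine ⟨i, fun n => ?_⟩
  obtain ⟨h1, h2, h3⟩ := key n
  rw [← h1]
  exact ⟨(t n).2, h2, h3⟩

end Traj

section MainAux
variable {𝕂 : Type*} [RCLike 𝕂] {r d : ℕ}

theorem eNorm_real_smul (x : ℝ) (hx : 0 ≤ x) (Q : Matrix (Fin d) (Fin d) 𝕂) :
    eNorm (x • Q) = x * eNorm Q := by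
  rw [eNorm, clm_real_smul, norm_smul ((x : 𝕂)) (Matrix.toEuclideanCLM (𝕜 := 𝕂) Q),
    RCLike.norm_ofReal, abs_of_nonneg hx]
  rfl

theorem norm_scaled (ρ : ℝ) (hρ : 0 < ρ) {nrm : EuclideanSpace 𝕂 (Fin d) → ℝ}
    (hnrm : IsNorm nrm) (n : ℕ) (v : EuclideanSpace 𝕂 (Fin d)) :
    nrm ((((ρ ^ n : ℝ) : 𝕂))⁻¹ • v) = (ρ ^ n)⁻¹ * nrm v := by
  rw [hnrm.2.1, norm_inv, RCLike.norm_ofReal, abs_of_pos (pow_pos hρ n)]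

theorem norm_scaled_block (ρ : ℝ) (hρ : 0 < ρ) {nrm : EuclideanSpace 𝕂 (Fin d) → ℝ}
    (hnrm : IsNorm nrm) (Q : Matrix (Fin d) (Fin d) 𝕂) (n L : ℕ)
    (v v' : EuclideanSpace 𝕂 (Fin d))
    (hv : Matrix.toEuclideanCLM (𝕜 := 𝕂) Q v = v') (val : ℝ)
    (hval' : nrm v' = ρ ^ (n + L) * val) :
    nrm (Matrix.toEuclideanCLM (𝕜 := 𝕂) ((ρ ^ L)⁻¹ • Q)
      ((((ρ ^ n : ℝ) : 𝕂))⁻¹ • v)) = val := by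
  rw [clm_real_smul, ContinuousLinearMap.smul_apply, map_smul, hv]
  rw [hnrm.2.1, hnrm.2.1, norm_inv, RCLike.norm_ofReal, RCLike.norm_ofReal, hval']
  rw [abs_of_pos (pow_pos hρ n), abs_of_pos (inv_pos.mpr (pow_pos hρ L)), pow_add]
  have h1 : ρ ^ n ≠ 0 := (pow_pos hρ n).ne'
  have h2 : ρ ^ L ≠ 0 := (pow_pos hρ L).ne'
  field_simp

theorem tendsto_norm_const {nrm : EuclideanSpace 𝕂 (Fin d) → ℝ} (hcont : Continuous nrm)
    {f : ℕ → EuclideanSpace 𝕂 (Fin d)} {x : EuclideanSpace 𝕂 (Fin d)}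
    (hf : Tendsto f atTop (𝓝 x)) {e : ℝ} (hval : ∀ k, nrm (f k) = e) : nrm x = e := by
  have h := (hcont.tendsto x).comp hf
  have h2 : (nrm ∘ f) = fun _ => e := funext hval
  rw [h2] at h
  exact tendsto_nhds_unique h tendsto_const_nhds

end MainAux

end UBN

end JSRPaper

set_option maxHeartbeats 2000000 in
open JSRPaper in
/-- **Theorem 2 (UBN).** If the `r`-tuple `A` is relatively product bounded and has both
the unbounded agreements property and the rank one property, then any two Barabanov norms
for `A` are proportional. -/
theorem stmt_4 {𝕂 : Type*} [RCLike 𝕂] {r d : ℕ}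
    (A : Fin r → Matrix (Fin d) (Fin d) 𝕂)
    (hb : RelProdBounded A) (hu : UnboundedAgreements A) (h1 : RankOneProp A)
    (N₁ N₂ : EuclideanSpace 𝕂 (Fin d) → ℝ)
    (hN₁ : IsBarabanov A N₁) (hN₂ : IsBarabanov A N₂) :
    ∃ c > (0 : ℝ), ∀ v, N₂ v = c * N₁ v := by
  classical
  obtain ⟨hρ, C, hC⟩ := hb
  have hr : 0 < r := r_pos_of_jsr_pos A hρ
  have hd : 0 < d := d_pos_of_jsr_pos A hρ
  have hn₁ : IsNorm N₁ := hN₁.1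
  have hn₂ : IsNorm N₂ := hN₂.1
  obtain ⟨a₁, ha₁, hlow₁⟩ := hn₁.lower hd
  obtain ⟨b₁, hb₁, hup₁⟩ := hn₁.upper
  -- the compact `N₁`-unit sphere
  have hKclosed : IsClosed {v : EuclideanSpace 𝕂 (Fin d) | N₁ v = 1} := by
    have : {v : EuclideanSpace 𝕂 (Fin d) | N₁ v = 1} = N₁ ⁻¹' {1} := rfl
    rw [this]
    exact IsClosed.preimage hn₁.continuous isClosed_singleton
  have hKbdd : Bornology.IsBounded {v : EuclideanSpace 𝕂 (Fin d) | N₁ v = 1} := by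
    refine (Metric.isBounded_closedBall (x := (0 : EuclideanSpace 𝕂 (Fin d))) (r := a₁⁻¹)).subset ?_
    intro v hv
    have h1 : a₁ * ‖v‖ ≤ 1 := by
      have := hlow₁ v
      have hv' : N₁ v = 1 := hv
      linarith [hv' ▸ this]
    have hinv : a₁ * a₁⁻¹ = 1 := mul_inv_cancel₀ ha₁.ne'
    rw [Metric.mem_closedBall, dist_zero_right]
    nlinarith
  have hKcpt : IsCompact {v : EuclideanSpace 𝕂 (Fin d) | N₁ v = 1} :=
    Metric.isCompact_of_isClosed_isBounded hKclosed hKbdd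
  -- normalisation helper
  have hscale : ∀ v : EuclideanSpace 𝕂 (Fin d), 0 < N₁ v →
      N₁ ((((N₁ v : ℝ) : 𝕂))⁻¹ • v) = 1 ∧
      N₂ ((((N₁ v : ℝ) : 𝕂))⁻¹ • v) = (N₁ v)⁻¹ * N₂ v := by
    intro v hv
    constructor
    · rw [hn₁.2.1, norm_inv, RCLike.norm_ofReal, abs_of_pos hv]
      exact inv_mul_cancel₀ hv.ne'
    · rw [hn₂.2.1, norm_inv, RCLike.norm_ofReal, abs_of_pos hv]
  have hKne : Set.Nonempty {v : EuclideanSpace 𝕂 (Fin d) | N₁ v = 1} := by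
    have hv₀ : (EuclideanSpace.single (⟨0, hd⟩ : Fin d) (1 : 𝕂)) ≠ 0 := by
      intro h
      have h2 : ‖EuclideanSpace.single (⟨0, hd⟩ : Fin d) (1 : 𝕂)‖ = 1 := by
        simp [EuclideanSpace.norm_single]
      rw [h] at h2
      simp at h2
    have hpos : 0 < N₁ (EuclideanSpace.single (⟨0, hd⟩ : Fin d) (1 : 𝕂)) := by
      refine lt_of_le_of_ne (hn₁.nonneg _) fun h => hv₀ ?_
      exact (hn₁.1 _).mp h.symm
    exact ⟨_, (hscale _ hpos).1⟩
  -- maximiser and minimiser of `N₂` on the `N₁`-sphere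
  obtain ⟨u₁, hu₁K, hmax⟩ := hKcpt.exists_isMaxOn hKne hn₂.continuous.continuousOn
  obtain ⟨u₂, hu₂K, hmin⟩ := hKcpt.exists_isMinOn hKne hn₂.continuous.continuousOn
  have hu₁1 : N₁ u₁ = 1 := hu₁K
  have hu₂1 : N₁ u₂ = 1 := hu₂K
  have hu₁0 : u₁ ≠ 0 := fun h => by rw [h, hn₁.zero] at hu₁1; norm_num at hu₁1
  have hu₂0 : u₂ ≠ 0 := fun h => by rw [h, hn₁.zero] at hu₂1; norm_num at hu₂1
  have hc : 0 < N₂ u₁ := by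
    refine lt_of_le_of_ne (hn₂.nonneg _) fun h => hu₁0 ?_
    exact (hn₂.1 _).mp h.symm
  -- pointwise bounds : `N₂ u₂ * N₁ v ≤ N₂ v ≤ N₂ u₁ * N₁ v`
  have hpt_le : ∀ v, N₂ v ≤ N₂ u₁ * N₁ v := by
    intro v
    rcases eq_or_ne v 0 with rfl | hv
    · simp [hn₁.zero, hn₂.zero]
    · have hv1 : 0 < N₁ v := by
        refine lt_of_le_of_ne (hn₁.nonneg v) fun h => hv ?_
        exact (hn₁.1 v).mp h.symm
      obtain ⟨hw1, hw2⟩ := hscale v hv1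
      have h3 : N₂ ((((N₁ v : ℝ) : 𝕂))⁻¹ • v) ≤ N₂ u₁ := hmax hw1
      rw [hw2] at h3
      have h4 := mul_le_mul_of_nonneg_right h3 hv1.le
      have h5 : ((N₁ v)⁻¹ * N₂ v) * N₁ v = N₂ v := by field_simp
      linarith
  have hpt_ge : ∀ v, N₂ u₂ * N₁ v ≤ N₂ v := by
    intro v
    rcases eq_or_ne v 0 with rfl | hv
    · simp [hn₁.zero, hn₂.zero]
    · have hv1 : 0 < N₁ v := by
        refine lt_of_le_of_ne (hn₁.nonneg v) fun h => hv ?_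
        exact (hn₁.1 v).mp h.symm
      obtain ⟨hw1, hw2⟩ := hscale v hv1
      have h3 : N₂ u₂ ≤ N₂ ((((N₁ v : ℝ) : 𝕂))⁻¹ • v) := hmin hw1
      rw [hw2] at h3
      have h4 := mul_le_mul_of_nonneg_right h3 hv1.le
      have h5 : ((N₁ v)⁻¹ * N₂ v) * N₁ v = N₂ v := by field_simp
      linarith
  -- extremal step at a maximiser point
  have hstepmax : ∀ v : EuclideanSpace 𝕂 (Fin d),
      (0 < N₁ v ∧ N₂ v = N₂ u₁ * N₁ v) → ∃ j : Fin r,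
      (0 < N₁ (Matrix.toEuclideanCLM (𝕜 := 𝕂) (A j) v) ∧
        N₂ (Matrix.toEuclideanCLM (𝕜 := 𝕂) (A j) v) =
          N₂ u₁ * N₁ (Matrix.toEuclideanCLM (𝕜 := 𝕂) (A j) v)) ∧
      N₁ (Matrix.toEuclideanCLM (𝕜 := 𝕂) (A j) v) = jsr A * N₁ v ∧
      N₂ (Matrix.toEuclideanCLM (𝕜 := 𝕂) (A j) v) = jsr A * N₂ v := by
    rintro v ⟨hv1, hv2⟩
    obtain ⟨j, hj⟩ := bara_exists hr hN₂ v
    have e1 : N₂ (Matrix.toEuclideanCLM (𝕜 := 𝕂) (A j) v) ≤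
        N₂ u₁ * N₁ (Matrix.toEuclideanCLM (𝕜 := 𝕂) (A j) v) := hpt_le _
    have e2 : N₁ (Matrix.toEuclideanCLM (𝕜 := 𝕂) (A j) v) ≤ jsr A * N₁ v := bara_le hN₁ v j
    have e3 : N₁ (Matrix.toEuclideanCLM (𝕜 := 𝕂) (A j) v) = jsr A * N₁ v := by
      refine le_antisymm e2 ?_
      have h4 : N₂ u₁ * (jsr A * N₁ v) ≤
          N₂ u₁ * N₁ (Matrix.toEuclideanCLM (𝕜 := 𝕂) (A j) v) := by
        calc N₂ u₁ * (jsr A * N₁ v) = jsr A * N₂ v := by rw [hv2]; ring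
          _ = N₂ (Matrix.toEuclideanCLM (𝕜 := 𝕂) (A j) v) := hj.symm
          _ ≤ N₂ u₁ * N₁ (Matrix.toEuclideanCLM (𝕜 := 𝕂) (A j) v) := e1
      exact (mul_le_mul_iff_right₀ hc).mp h4
    refine ⟨j, ⟨?_, ?_⟩, e3, hj⟩
    · rw [e3]; exact mul_pos hρ hv1
    · rw [hj, hv2, e3]; ring
  -- extremal step at a minimiser point
  have hstepmin : ∀ v : EuclideanSpace 𝕂 (Fin d),
      (0 < N₁ v ∧ N₂ v = N₂ u₂ * N₁ v) → ∃ j : Fin r,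
      (0 < N₁ (Matrix.toEuclideanCLM (𝕜 := 𝕂) (A j) v) ∧
        N₂ (Matrix.toEuclideanCLM (𝕜 := 𝕂) (A j) v) =
          N₂ u₂ * N₁ (Matrix.toEuclideanCLM (𝕜 := 𝕂) (A j) v)) ∧
      N₁ (Matrix.toEuclideanCLM (𝕜 := 𝕂) (A j) v) = jsr A * N₁ v ∧
      N₂ (Matrix.toEuclideanCLM (𝕜 := 𝕂) (A j) v) = jsr A * N₂ v := by
    rintro v ⟨hv1, hv2⟩
    obtain ⟨j, hj⟩ := bara_exists hr hN₁ v
    have e1 : N₂ u₂ * N₁ (Matrix.toEuclideanCLM (𝕜 := 𝕂) (A j) v) ≤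
        N₂ (Matrix.toEuclideanCLM (𝕜 := 𝕂) (A j) v) := hpt_ge _
    have e2 : N₂ (Matrix.toEuclideanCLM (𝕜 := 𝕂) (A j) v) ≤ jsr A * N₂ v := bara_le hN₂ v j
    have e4 : N₂ (Matrix.toEuclideanCLM (𝕜 := 𝕂) (A j) v) = jsr A * N₂ v := by
      refine le_antisymm e2 ?_
      rw [hv2]
      calc jsr A * (N₂ u₂ * N₁ v) = N₂ u₂ * (jsr A * N₁ v) := by ring
        _ = N₂ u₂ * N₁ (Matrix.toEuclideanCLM (𝕜 := 𝕂) (A j) v) := by rw [hj]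
        _ ≤ N₂ (Matrix.toEuclideanCLM (𝕜 := 𝕂) (A j) v) := e1
    refine ⟨j, ⟨?_, ?_⟩, hj, e4⟩
    · rw [hj]; exact mul_pos hρ hv1
    · rw [e4, hv2, hj]; ring
  -- the two extremal trajectories
  obtain ⟨i₁, H₁⟩ := exists_traj A hr N₁ N₂ (jsr A) hstepmax u₁
    ⟨by rw [hu₁1]; norm_num, by rw [hu₁1, mul_one]⟩
  obtain ⟨i₂, H₂⟩ := exists_traj A hr N₁ N₂ (jsr A) hstepmin u₂
    ⟨by rw [hu₂1]; norm_num, by rw [hu₂1, mul_one]⟩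
  have hT₁ : ∀ n, N₁ (Matrix.toEuclideanCLM (𝕜 := 𝕂) (seqProd A i₁ n) u₁) = jsr A ^ n := by
    intro n; rw [(H₁ n).2.1, hu₁1, mul_one]
  have hT₁' : ∀ n, N₂ (Matrix.toEuclideanCLM (𝕜 := 𝕂) (seqProd A i₁ n) u₁) =
      jsr A ^ n * N₂ u₁ := fun n => (H₁ n).2.2
  have hT₂ : ∀ n, N₁ (Matrix.toEuclideanCLM (𝕜 := 𝕂) (seqProd A i₂ n) u₂) = jsr A ^ n := by
    intro n; rw [(H₂ n).2.1, hu₂1, mul_one]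
  have hT₂' : ∀ n, N₂ (Matrix.toEuclideanCLM (𝕜 := 𝕂) (seqProd A i₂ n) u₂) =
      jsr A ^ n * N₂ u₂ := fun n => (H₂ n).2.2
  -- positive-limsup certificates
  have hcert : ∀ (i : ℕ → Fin r) (u : EuclideanSpace 𝕂 (Fin d)),
      (∀ n, N₁ (Matrix.toEuclideanCLM (𝕜 := 𝕂) (seqProd A i n) u) = jsr A ^ n) →
      ∃ c0 > (0 : ℝ), ∀ m : ℕ, ∃ n, m ≤ n ∧ c0 ≤ eNorm (seqProd A i n) / jsr A ^ n := by
    intro i u hvals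
    have hu0 : u ≠ 0 := by
      intro h
      have h2 := hvals 0
      rw [h, map_zero, hn₁.zero] at h2
      simp at h2
    have hun : 0 < ‖u‖ := norm_pos_iff.mpr hu0
    refine ⟨((b₁ + 1) * ‖u‖)⁻¹, by positivity, fun m => ⟨m, le_rfl, ?_⟩⟩
    have h1 : jsr A ^ m ≤ (b₁ + 1) * ‖Matrix.toEuclideanCLM (𝕜 := 𝕂) (seqProd A i m) u‖ := by
      have h2 := hup₁ (Matrix.toEuclideanCLM (𝕜 := 𝕂) (seqProd A i m) u)
      have h3 := hvals m
      nlinarith [norm_nonneg (Matrix.toEuclideanCLM (𝕜 := 𝕂) (seqProd A i m) u)]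
    have h3 : ‖Matrix.toEuclideanCLM (𝕜 := 𝕂) (seqProd A i m) u‖ ≤
        eNorm (seqProd A i m) * ‖u‖ :=
      ContinuousLinearMap.le_opNorm (Matrix.toEuclideanCLM (𝕜 := 𝕂) (seqProd A i m)) u
    rw [le_div_iff₀ (pow_pos hρ m)]
    have h4 : jsr A ^ m ≤ ((b₁ + 1) * ‖u‖) * eNorm (seqProd A i m) := by nlinarith
    have h5 : ((b₁ + 1) * ‖u‖)⁻¹ * ((b₁ + 1) * ‖u‖) = 1 :=
      inv_mul_cancel₀ (by positivity)
    calc ((b₁ + 1) * ‖u‖)⁻¹ * jsr A ^ m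
        ≤ ((b₁ + 1) * ‖u‖)⁻¹ * (((b₁ + 1) * ‖u‖) * eNorm (seqProd A i m)) :=
          mul_le_mul_of_nonneg_left h4 (by positivity)
      _ = eNorm (seqProd A i m) := by rw [← mul_assoc, h5, one_mul]
  -- unbounded agreements
  have hAgrAll : ∀ L : ℕ, ∃ n₁ n₂ : ℕ, ∀ k, 1 ≤ k → k ≤ L → i₁ (n₁ + k) = i₂ (n₂ + k) :=
    fun L => hu L i₁ i₂ (hcert i₁ u₁ hT₁) (hcert i₂ u₂ hT₂)
  choose nf₁ nf₂ hAgr using hAgrAll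
  -- block products and renormalised vectors along the subsequence
  set TT : ℕ → (EuclideanSpace 𝕂 (Fin d) →L[𝕂] EuclideanSpace 𝕂 (Fin d)) :=
    fun L => Matrix.toEuclideanCLM (𝕜 := 𝕂)
      ((jsr A ^ L)⁻¹ • wordProd A (fun k : Fin L => i₁ (nf₁ L + (k.val + 1)))) with hTTdef
  set ww₁ : ℕ → EuclideanSpace 𝕂 (Fin d) := fun L =>
    (((jsr A ^ (nf₁ L) : ℝ) : 𝕂))⁻¹ •
      (Matrix.toEuclideanCLM (𝕜 := 𝕂) (seqProd A i₁ (nf₁ L)) u₁) with hww₁def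
  set ww₂ : ℕ → EuclideanSpace 𝕂 (Fin d) := fun L =>
    (((jsr A ^ (nf₂ L) : ℝ) : 𝕂))⁻¹ •
      (Matrix.toEuclideanCLM (𝕜 := 𝕂) (seqProd A i₂ (nf₂ L)) u₂) with hww₂def
  -- block product agreement
  have hblock : ∀ L : ℕ, wordProd A (fun k : Fin L => i₁ (nf₁ L + (k.val + 1))) =
      wordProd A (fun k : Fin L => i₂ (nf₂ L + (k.val + 1))) := by
    intro L
    exact congrArg (fun f => wordProd A f) (funext fun k =>
      hAgr L (k.val + 1) (Nat.succ_le_succ (Nat.zero_le _)) (Nat.succ_le_of_lt k.isLt))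
  have happly₁ : ∀ L : ℕ,
      Matrix.toEuclideanCLM (𝕜 := 𝕂) (wordProd A (fun k : Fin L => i₁ (nf₁ L + (k.val + 1))))
        (Matrix.toEuclideanCLM (𝕜 := 𝕂) (seqProd A i₁ (nf₁ L)) u₁) =
      Matrix.toEuclideanCLM (𝕜 := 𝕂) (seqProd A i₁ (nf₁ L + L)) u₁ := by
    intro L
    rw [seqProd_add A i₁ (nf₁ L) L, clm_mul_apply]
  have happly₂ : ∀ L : ℕ,
      Matrix.toEuclideanCLM (𝕜 := 𝕂) (wordProd A (fun k : Fin L => i₁ (nf₁ L + (k.val + 1))))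
        (Matrix.toEuclideanCLM (𝕜 := 𝕂) (seqProd A i₂ (nf₂ L)) u₂) =
      Matrix.toEuclideanCLM (𝕜 := 𝕂) (seqProd A i₂ (nf₂ L + L)) u₂ := by
    intro L
    rw [hblock L, seqProd_add A i₂ (nf₂ L) L, clm_mul_apply]
  -- the four value computations
  have hval₁ : ∀ L, N₁ (TT L (ww₁ L)) = 1 := by
    intro L
    exact norm_scaled_block (jsr A) hρ hn₁ _ (nf₁ L) L _ _ (happly₁ L) 1
      (by rw [hT₁ (nf₁ L + L), mul_one])
  have hval₂ : ∀ L, N₂ (TT L (ww₁ L)) = N₂ u₁ := by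
    intro L
    exact norm_scaled_block (jsr A) hρ hn₂ _ (nf₁ L) L _ _ (happly₁ L) (N₂ u₁)
      (hT₁' (nf₁ L + L))
  have hval₃ : ∀ L, N₁ (TT L (ww₂ L)) = 1 := by
    intro L
    exact norm_scaled_block (jsr A) hρ hn₁ _ (nf₂ L) L _ _ (happly₂ L) 1
      (by rw [hT₂ (nf₂ L + L), mul_one])
  have hval₄ : ∀ L, N₂ (TT L (ww₂ L)) = N₂ u₂ := by
    intro L
    exact norm_scaled_block (jsr A) hρ hn₂ _ (nf₂ L) L _ _ (happly₂ L) (N₂ u₂)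
      (hT₂' (nf₂ L + L))
  -- membership of the normalised vectors in the sphere
  have hw₁K : ∀ L, N₁ (ww₁ L) = 1 := by
    intro L
    rw [hww₁def]
    rw [norm_scaled (jsr A) hρ hn₁ (nf₁ L), hT₁ (nf₁ L)]
    exact inv_mul_cancel₀ (pow_pos hρ _).ne'
  have hw₂K : ∀ L, N₁ (ww₂ L) = 1 := by
    intro L
    rw [hww₂def]
    rw [norm_scaled (jsr A) hρ hn₁ (nf₂ L), hT₂ (nf₂ L)]
    exact inv_mul_cancel₀ (pow_pos hρ _).ne'
  -- bound on the operators
  have hTTle : ∀ L, ‖TT L‖ ≤ C := by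
    intro L
    have h1 : ‖TT L‖ =
        (jsr A ^ L)⁻¹ * eNorm (wordProd A (fun k : Fin L => i₁ (nf₁ L + (k.val + 1)))) := by
      rw [hTTdef]
      exact eNorm_real_smul _ (inv_nonneg.mpr (pow_pos hρ L).le) _
    rw [h1]
    have h2 := hC L (fun k : Fin L => i₁ (nf₁ L + (k.val + 1)))
    have h3 : (0:ℝ) < jsr A ^ L := pow_pos hρ L
    calc (jsr A ^ L)⁻¹ * eNorm (wordProd A (fun k : Fin L => i₁ (nf₁ L + (k.val + 1))))
        ≤ (jsr A ^ L)⁻¹ * (C * jsr A ^ L) :=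
          mul_le_mul_of_nonneg_left h2 (inv_nonneg.mpr h3.le)
      _ = C := by field_simp
  -- compactness and subsequence extraction
  haveI : FiniteDimensional 𝕂 (EuclideanSpace 𝕂 (Fin d)) := by infer_instance
  haveI : ProperSpace (EuclideanSpace 𝕂 (Fin d) →L[𝕂] EuclideanSpace 𝕂 (Fin d)) :=
    FiniteDimensional.proper 𝕂 _
  have hscpt : IsCompact ((Metric.closedBall (0 : EuclideanSpace 𝕂 (Fin d) →L[𝕂]
      EuclideanSpace 𝕂 (Fin d)) C) ×ˢ
      ({v : EuclideanSpace 𝕂 (Fin d) | N₁ v = 1} ×ˢ {v : EuclideanSpace 𝕂 (Fin d) | N₁ v = 1})) :=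
    (isCompact_closedBall _ _).prod (hKcpt.prod hKcpt)
  have hmem : ∀ L : ℕ, (TT L, ww₁ L, ww₂ L) ∈
      ((Metric.closedBall (0 : EuclideanSpace 𝕂 (Fin d) →L[𝕂] EuclideanSpace 𝕂 (Fin d)) C) ×ˢ
      ({v : EuclideanSpace 𝕂 (Fin d) | N₁ v = 1} ×ˢ {v : EuclideanSpace 𝕂 (Fin d) | N₁ v = 1})) := by
    intro L
    refine ⟨?_, hw₁K L, hw₂K L⟩
    rw [Metric.mem_closedBall, dist_zero_right]
    exact hTTle L
  obtain ⟨p, hpmem, φ, hφ, hconv⟩ := hscpt.tendsto_subseq hmem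
  obtain ⟨Tst, w₁st, w₂st⟩ := p
  -- componentwise convergence
  have hTconv : Tendsto (fun k => TT (φ k)) atTop (𝓝 Tst) := by
    have h := (continuous_fst.tendsto (Tst, w₁st, w₂st)).comp hconv
    exact h
  have hw₁conv : Tendsto (fun k => ww₁ (φ k)) atTop (𝓝 w₁st) := by
    have h := ((continuous_fst.comp continuous_snd).tendsto (Tst, w₁st, w₂st)).comp hconv
    exact h
  have hw₂conv : Tendsto (fun k => ww₂ (φ k)) atTop (𝓝 w₂st) := by
    have h := ((continuous_snd.comp continuous_snd).tendsto (Tst, w₁st, w₂st)).comp hconv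
    exact h
  have hcontap : Continuous fun q : (EuclideanSpace 𝕂 (Fin d) →L[𝕂] EuclideanSpace 𝕂 (Fin d)) ×
      EuclideanSpace 𝕂 (Fin d) => q.1 q.2 := isBoundedBilinearMap_apply.continuous
  have happ₁ : Tendsto (fun k => TT (φ k) (ww₁ (φ k))) atTop (𝓝 (Tst w₁st)) := by
    have h := (hcontap.tendsto (Tst, w₁st)).comp (hTconv.prodMk_nhds hw₁conv)
    exact h
  have happ₂ : Tendsto (fun k => TT (φ k) (ww₂ (φ k))) atTop (𝓝 (Tst w₂st)) := by
    have h := (hcontap.tendsto (Tst, w₂st)).comp (hTconv.prodMk_nhds hw₂conv)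
    exact h
  -- limit values
  have e₁ : N₁ (Tst w₁st) = 1 :=
    tendsto_norm_const hn₁.continuous happ₁ fun k => hval₁ (φ k)
  have e₂ : N₂ (Tst w₁st) = N₂ u₁ :=
    tendsto_norm_const hn₂.continuous happ₁ fun k => hval₂ (φ k)
  have e₃ : N₁ (Tst w₂st) = 1 :=
    tendsto_norm_const hn₁.continuous happ₂ fun k => hval₃ (φ k)
  have e₄ : N₂ (Tst w₂st) = N₂ u₂ :=
    tendsto_norm_const hn₂.continuous happ₂ fun k => hval₄ (φ k)
  -- the limit matrix
  set B : Matrix (Fin d) (Fin d) 𝕂 := (Matrix.toEuclideanCLM (𝕜 := 𝕂)).symm Tst with hBdef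
  have hTB : Matrix.toEuclideanCLM (𝕜 := 𝕂) B = Tst := by
    rw [hBdef]; exact StarAlgEquiv.apply_symm_apply _ _
  have hBls : B ∈ limitSemigroup A := by
    intro m ε hε
    rw [Metric.tendsto_atTop] at hTconv
    obtain ⟨k₀, hk₀⟩ := hTconv ε hε
    refine ⟨φ (max k₀ m), le_trans (le_max_right k₀ m) hφ.le_apply,
      (fun k : Fin (φ (max k₀ m)) => i₁ (nf₁ (φ (max k₀ m)) + (k.val + 1))), ?_⟩
    have h5 := hk₀ (max k₀ m) (le_max_left _ _)
    rw [dist_eq_norm] at h5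
    have h6 : eNorm ((jsr A ^ (φ (max k₀ m)))⁻¹ •
        wordProd A (fun k : Fin (φ (max k₀ m)) => i₁ (nf₁ (φ (max k₀ m)) + (k.val + 1))) - B) =
        ‖TT (φ (max k₀ m)) - Tst‖ := by
      rw [eNorm, map_sub, hTB, hTTdef]
    rw [h6]
    exact h5
  have hTst0 : Tst w₁st ≠ 0 := by
    intro h
    rw [h, hn₁.zero] at e₁
    norm_num at e₁
  have hB0 : B ≠ 0 := by
    intro h
    rw [h] at hTB
    rw [map_zero] at hTB
    rw [← hTB] at hTst0
    simp at hTst0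
  -- rank one
  have hrank : B.rank = 1 := h1.2 B hBls hB0
  have hfr : Module.finrank 𝕂 (LinearMap.range (Matrix.mulVecLin B)) = 1 := hrank
  -- the two limit vectors lie in the (one-dimensional) range of `B`
  have hx : (WithLp.equiv 2 (Fin d → 𝕂)) (Tst w₁st) ∈ LinearMap.range (Matrix.mulVecLin B) := by
    refine ⟨(WithLp.equiv 2 (Fin d → 𝕂)) w₁st, ?_⟩
    rw [Matrix.mulVecLin_apply, ← hTB]; rfl
  have hy : (WithLp.equiv 2 (Fin d → 𝕂)) (Tst w₂st) ∈ LinearMap.range (Matrix.mulVecLin B) := by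
    refine ⟨(WithLp.equiv 2 (Fin d → 𝕂)) w₂st, ?_⟩
    rw [Matrix.mulVecLin_apply, ← hTB]; rfl
  have hxne : (⟨(WithLp.equiv 2 (Fin d → 𝕂)) (Tst w₁st), hx⟩ :
      LinearMap.range (Matrix.mulVecLin B)) ≠ 0 := by
    intro h
    apply hTst0
    have h2 : (WithLp.equiv 2 (Fin d → 𝕂)) (Tst w₁st) = 0 := by
      exact congrArg Subtype.val h
    have := congrArg (WithLp.equiv 2 (Fin d → 𝕂)).symm h2
    simpa using this
  obtain ⟨μ, hμ⟩ := (finrank_eq_one_iff_of_nonzero' _ hxne).mp hfr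
    ⟨(WithLp.equiv 2 (Fin d → 𝕂)) (Tst w₂st), hy⟩
  have hμ' : μ • (WithLp.equiv 2 (Fin d → 𝕂)) (Tst w₁st) =
      (WithLp.equiv 2 (Fin d → 𝕂)) (Tst w₂st) := by
    exact congrArg Subtype.val hμ
  have hμE : Tst w₂st = μ • Tst w₁st := by
    have := congrArg (WithLp.equiv 2 (Fin d → 𝕂)).symm hμ'
    simpa [WithLp.toLp_smul] using this.symm
  -- conclude `N₂ u₂ = N₂ u₁`
  have hnorm_μ : ‖μ‖ = 1 := by
    have h := e₃
    rw [hμE, hn₁.2.1, e₁, mul_one] at h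
    exact h
  have hcc : N₂ u₂ = N₂ u₁ := by
    have h := e₄
    rw [hμE, hn₂.2.1, e₂, hnorm_μ, one_mul] at h
    exact h.symm
  refine ⟨N₂ u₁, hc, fun v => le_antisymm (hpt_le v) ?_⟩
  rw [← hcc]
  exact hpt_ge v
end
end
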